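/- arXiv:2401.10027 — 4 statements merged into one kernel-verified Lean document; each statement's English description precedes it below -/
import Mathlib

section
/- Every primitive modified ascent sequence that avoids the pattern 213 also avoids the pattern 212, and every primitive modified ascent sequence that avoids the pattern 231 also avoids the pattern 221; that is, Prim(212,213) = Prim(213) and Prim(221,231) = Prim(231). -/
/-- A Cayley permutation of length `n`: a word whose set of values is `{1, …, k}`
for some `k ≤ n`. -/
def IsCayley {n : ℕ} (x : Fin n → ℕ) : Prop :=
  ∃ k, k ≤ n ∧ Set.range x = Set.Icc 1 k

/-- Ascent tops of `x`: indices `i` with `i = 0` or `x (i-1) < x i`. -/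
def AscTops {n : ℕ} (x : Fin n → ℕ) : Set (Fin n) :=
  {i | ∀ j : Fin n, (j : ℕ) + 1 = (i : ℕ) → x j < x i}

/-- Leftmost copies of `x`: indices `i` such that the value `x i` does not occur earlier. -/
def Nub {n : ℕ} (x : Fin n → ℕ) : Set (Fin n) :=
  {i | ∀ j : Fin n, j < i → x j ≠ x i}

/-- A modified ascent sequence: a Cayley permutation whose ascent tops
are exactly its leftmost copies. -/
def IsModasc {n : ℕ} (x : Fin n → ℕ) : Prop :=
  IsCayley x ∧ AscTops x = Nub x

/-- `x` has no flat steps (no two consecutive equal entries). -/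
def NoFlat {n : ℕ} (x : Fin n → ℕ) : Prop :=
  ∀ i j : Fin n, (j : ℕ) = (i : ℕ) + 1 → x i ≠ x j

/-- A primitive modified ascent sequence. -/
def IsPrim {n : ℕ} (x : Fin n → ℕ) : Prop :=
  IsModasc x ∧ NoFlat x

/-- The word `x` contains the pattern `y`. -/
def Contains {n k : ℕ} (x : Fin n → ℕ) (y : Fin k → ℕ) : Prop :=
  ∃ f : Fin k → Fin n, StrictMono f ∧ ∀ s t, y s < y t ↔ x (f s) < x (f t)

/-- The word `x` avoids the pattern `y`. -/
def Avoids {n k : ℕ} (x : Fin n → ℕ) (y : Fin k → ℕ) : Prop :=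
  ¬ Contains x y

/-- Standardization: `(Std x) i = #{j : x j < x i} + #{j ≤ i : x j = x i}`. -/
def Std {n : ℕ} (x : Fin n → ℕ) : Fin n → ℕ :=
  fun i => (Finset.univ.filter fun j => x j < x i).card +
    (Finset.univ.filter fun j => j ≤ i ∧ x j = x i).card

/-- `p` is a permutation of `{1, …, n}` (written as a word). -/
def IsPerm {n : ℕ} (p : Fin n → ℕ) : Prop :=
  Function.Injective p ∧ Set.range p = Set.Icc 1 n

/-- `p` contains the bivincular pattern `ω = (321, {1}, {1})`:
there are `i` and `j` with `i + 1 < j`, `p i > p (i+1)` and `p (i+1) = p j + 1`. -/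
def ContainsOmega {n : ℕ} (p : Fin n → ℕ) : Prop :=
  ∃ (i j : Fin n) (hi : (i : ℕ) + 1 < n),
    (i : ℕ) + 1 < (j : ℕ) ∧ p ⟨(i : ℕ) + 1, hi⟩ < p i ∧ p ⟨(i : ℕ) + 1, hi⟩ = p j + 1

/-- Membership in `Ω_n`: a permutation of `{1, …, n}` whose first entry is `1`
and which avoids the bivincular pattern `ω`. -/
def InOmega {n : ℕ} (p : Fin n → ℕ) : Prop :=
  IsPerm p ∧ (∀ h : 0 < n, p ⟨0, h⟩ = 1) ∧ ¬ ContainsOmega p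
/-- `Prim(212,213) = Prim(213)` and `Prim(221,231) = Prim(231)`. -/
theorem prim_213_231 (n : ℕ) :
    ({x : Fin n → ℕ | IsPrim x ∧ Avoids x ![2, 1, 2] ∧ Avoids x ![2, 1, 3]} =
      {x : Fin n → ℕ | IsPrim x ∧ Avoids x ![2, 1, 3]}) ∧
    ({x : Fin n → ℕ | IsPrim x ∧ Avoids x ![2, 2, 1] ∧ Avoids x ![2, 3, 1]} =
      {x : Fin n → ℕ | IsPrim x ∧ Avoids x ![2, 3, 1]}) := by
  constructor
  · ext x
    simp only [Set.mem_setOf_eq, and_assoc]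
    refine ⟨fun h => ⟨h.1, h.2.2⟩, fun h => ⟨h.1, ?_, h.2⟩⟩
    obtain ⟨⟨⟨_, hAsc⟩, hflat⟩, h213⟩ := h
    rintro ⟨f, hf, hiff⟩
    have hba : x (f 1) < x (f 0) := (hiff 1 0).mp (by norm_num)
    have hbc : x (f 1) < x (f 2) := (hiff 1 2).mp (by decide)
    have hac : ¬ x (f 0) < x (f 2) := fun hh => by simpa using (hiff 0 2).mpr hh
    have hca : ¬ x (f 2) < x (f 0) := fun hh => by simpa using (hiff 2 0).mpr hh
    have heq : x (f 0) = x (f 2) := by omega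
    have h02 : f 0 < f 2 := hf (by decide)
    have hcnub : f 2 ∉ Nub x := fun hh => (hh (f 0) h02) heq
    rw [← hAsc] at hcnub
    simp only [AscTops, Set.mem_setOf_eq, not_forall] at hcnub
    obtain ⟨j, hj1, hj2⟩ := hcnub
    have hne : x j ≠ x (f 2) := hflat j (f 2) hj1.symm
    have hjbig : x (f 2) < x j := by omega
    have h12 : f 1 < f 2 := hf (by decide)
    have hbj : f 1 < j := by
      rw [Fin.lt_def] at h12 ⊢
      rcases Nat.lt_or_ge (f 1 : ℕ) (j : ℕ) with hlt | hge
      · exact hlt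
      · exfalso
        have : (f 1 : ℕ) = (j : ℕ) := by omega
        have : f 1 = j := Fin.ext this
        subst this; omega
    exact h213 ⟨![f 0, f 1, j], by
      intro s t hst
      fin_cases s <;> fin_cases t <;>
        first
          | exact absurd hst (by decide)
          | exact hf (by decide)
          | exact hbj
          | exact (hf (by decide : (0:Fin 3) < 1)).trans hbj, by
      intro s t
      fin_cases s <;> fin_cases t <;> simp <;> omega⟩
  · ext x
    simp only [Set.mem_setOf_eq, and_assoc]
    refine ⟨fun h => ⟨h.1, h.2.2⟩, fun h => ⟨h.1, ?_, h.2⟩⟩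
    obtain ⟨⟨⟨_, hAsc⟩, hflat⟩, h231⟩ := h
    rintro ⟨f, hf, hiff⟩
    have hca : x (f 2) < x (f 0) := (hiff 2 0).mp (by decide)
    have hcb : x (f 2) < x (f 1) := (hiff 2 1).mp (by decide)
    have hab : ¬ x (f 0) < x (f 1) := fun hh => by simpa using (hiff 0 1).mpr hh
    have hba : ¬ x (f 1) < x (f 0) := fun hh => by simpa using (hiff 1 0).mpr hh
    have heq : x (f 0) = x (f 1) := by omega
    have h01 : f 0 < f 1 := hf (by decide)
    have hbnub : f 1 ∉ Nub x := fun hh => (hh (f 0) h01) heq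
    rw [← hAsc] at hbnub
    simp only [AscTops, Set.mem_setOf_eq, not_forall] at hbnub
    obtain ⟨j, hj1, hj2⟩ := hbnub
    have hne : x j ≠ x (f 1) := hflat j (f 1) hj1.symm
    have hjbig : x (f 1) < x j := by omega
    have h12 : f 1 < f 2 := hf (by decide)
    have haj : f 0 < j := by
      rw [Fin.lt_def] at h01 ⊢
      rcases Nat.lt_or_ge (f 0 : ℕ) (j : ℕ) with hlt | hge
      · exact hlt
      · exfalso
        have : (f 0 : ℕ) = (j : ℕ) := by omega
        have : f 0 = j := Fin.ext this
        subst this; omega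
    have hjc : j < f 2 := by
      rw [Fin.lt_def] at h12 ⊢; omega
    exact h231 ⟨![f 0, j, f 2], by
      intro s t hst
      fin_cases s <;> fin_cases t <;>
        first
          | exact absurd hst (by decide)
          | exact haj
          | exact hjc
          | exact haj.trans hjc, by
      intro s t
      fin_cases s <;> fin_cases t <;> simp <;> omega⟩
end

section
/- Let y be the classical pattern 213 or the classical pattern 231. For every n ≥ 0, the number of permutations of {1,…,n} that avoid both the bivincular pattern ω and the classical pattern y equals the n-th Motzkin number m_n = Σ_{k≥0} C(n,2k) · c_k, where c_k is the k-th Catalan number. -/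
/-- Motzkin numbers via the binomial-Catalan formula. -/
def Mz (n : ℕ) : ℕ := ∑ k ∈ Finset.range (n+1), Nat.choose n (2*k) * catalan k

lemma choose_vdm (r s m : ℕ) :
    ∑ j ∈ Finset.range (m+1), Nat.choose j r * Nat.choose (m-j) s
      = Nat.choose (m+1) (r+s+1) := by
  induction m generalizing s with
  | zero =>
    rw [Finset.sum_range_one]
    rcases Nat.eq_zero_or_pos r with hr | hr
    · rcases Nat.eq_zero_or_pos s with hs | hs
      · subst hr; subst hs; simp
      · subst hr
        rw [Nat.choose_eq_zero_of_lt (show 0 < s by omega),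
          Nat.choose_eq_zero_of_lt (show 1 < 0 + s + 1 by omega), Nat.mul_zero]
    · rw [Nat.choose_eq_zero_of_lt (show 0 < r by omega),
        Nat.choose_eq_zero_of_lt (show 1 < r + s + 1 by omega), Nat.zero_mul]
  | succ m ih =>
    cases s with
    | zero =>
      simp only [Nat.choose_zero_right, mul_one, Nat.add_zero]
      have h1 : ∑ j ∈ Finset.range (m+2), Nat.choose j r
          = ∑ j ∈ Finset.Icc r (m+1), Nat.choose j r := by
        rcases le_or_gt r (m+1) with h | h
        · refine (Finset.sum_subset ?_ ?_).symm
          · intro x hx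
            simp only [Finset.mem_Icc] at hx
            exact Finset.mem_range.2 (by omega)
          · intro x hx hx'
            simp only [Finset.mem_Icc, not_and, not_le] at hx'
            simp only [Finset.mem_range] at hx
            have hxr : x < r := by
              by_contra hc
              push_neg at hc
              have := hx' hc
              omega
            exact Nat.choose_eq_zero_of_lt hxr
        · rw [Finset.Icc_eq_empty (by omega), Finset.sum_empty]
          refine Finset.sum_eq_zero fun x hx => ?_
          simp only [Finset.mem_range] at hx
          exact Nat.choose_eq_zero_of_lt (by omega)
      rw [h1, Nat.sum_Icc_choose]
    | succ s =>
      rw [Finset.sum_range_succ]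
      have hlast : Nat.choose (m+1) r * Nat.choose (m+1-(m+1)) (s+1) = 0 := by
        simp
      rw [hlast, Nat.add_zero]
      have key : ∀ j ∈ Finset.range (m+1), Nat.choose j r * Nat.choose (m+1-j) (s+1)
          = Nat.choose j r * Nat.choose (m-j) (s+1) + Nat.choose j r * Nat.choose (m-j) s := by
        intro j hj
        simp only [Finset.mem_range] at hj
        have h2 : m + 1 - j = (m - j) + 1 := by omega
        rw [h2, Nat.choose_succ_succ', mul_add]
        omega
      rw [Finset.sum_congr rfl key, Finset.sum_add_distrib, ih (s+1), ih s]
      have h3 : r + (s+1) + 1 = (r + s + 1) + 1 := by omega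
      rw [h3, show m+1+1 = (m+1)+1 from rfl, show r+s+1+1 = (r+s+1)+1 from rfl,
        Nat.choose_succ_succ (m+1) (r+s+1)]
      simp [Nat.succ_eq_add_one]
      omega

lemma Mz_ext {j N : ℕ} (h : j ≤ N) :
    Mz j = ∑ a ∈ Finset.range (N+1), Nat.choose j (2*a) * catalan a := by
  refine Finset.sum_subset ?_ ?_
  · intro x hx
    simp only [Finset.mem_range] at hx ⊢
    omega
  · intro x _ hx'
    simp only [Finset.mem_range, not_lt] at hx'
    rw [Nat.choose_eq_zero_of_lt (by omega), Nat.zero_mul]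

lemma Mz_succ (n : ℕ) : Mz (n+1) = Mz n + ∑ j ∈ Finset.range n, Mz j * Mz (n-1-j) := by
  rcases Nat.eq_zero_or_pos n with hn | hn
  · subst hn
    simp [Mz, Finset.sum_range_succ]
  set S : ℕ := ∑ a ∈ Finset.range (n+1), ∑ b ∈ Finset.range (n+1),
      Nat.choose n (2*a+2*b+1) * (catalan a * catalan b) with hS
  -- Step C : Mz (n+1) = Mz n + T
  have hC : Mz (n+1) = Mz n +
      ∑ k ∈ Finset.range (n+1), Nat.choose n (2*k+1) * catalan (k+1) := by
    have e1 : Mz (n+1) = ∑ k ∈ Finset.range (n+1), Nat.choose (n+1) (2*(k+1)) * catalan (k+1)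
        + Nat.choose (n+1) 0 * catalan 0 := by
      rw [Mz, Finset.sum_range_succ']
    have e2 : ∀ k ∈ Finset.range (n+1), Nat.choose (n+1) (2*(k+1)) * catalan (k+1)
        = Nat.choose n (2*(k+1)) * catalan (k+1) + Nat.choose n (2*k+1) * catalan (k+1) := by
      intro k _
      have h2 : 2*(k+1) = (2*k+1)+1 := by omega
      rw [h2, Nat.choose_succ_succ, Nat.add_mul]
      simp only [Nat.succ_eq_add_one]
      omega
    have e4 : Mz n = ∑ k ∈ Finset.range (n+2), Nat.choose n (2*k) * catalan k :=
      Mz_ext (by omega)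
    have e4' : ∑ k ∈ Finset.range (n+2), Nat.choose n (2*k) * catalan k
        = ∑ k ∈ Finset.range (n+1), Nat.choose n (2*(k+1)) * catalan (k+1)
          + Nat.choose n 0 * catalan 0 :=
      Finset.sum_range_succ' _ (n+1)
    rw [e1, Finset.sum_congr rfl e2, Finset.sum_add_distrib, e4, e4']
    simp only [Nat.choose_zero_right, catalan_zero, mul_one]
    omega
  -- Step B : T = S
  have hB : ∑ k ∈ Finset.range (n+1), Nat.choose n (2*k+1) * catalan (k+1) = S := by
    have e1 : ∀ k ∈ Finset.range (n+1), Nat.choose n (2*k+1) * catalan (k+1)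
        = ∑ i ∈ Finset.range (k+1), Nat.choose n (2*k+1) * (catalan i * catalan (k-i)) := by
      intro k _
      rw [catalan_succ', Finset.Nat.sum_antidiagonal_eq_sum_range_succ_mk, Finset.mul_sum]
    rw [Finset.sum_congr rfl e1, Finset.sum_sigma']
    have hSrw : S = ∑ ab ∈ (Finset.range (n+1) ×ˢ Finset.range (n+1)).filter
        (fun ab => ab.1 + ab.2 ≤ n),
          Nat.choose n (2*ab.1+2*ab.2+1) * (catalan ab.1 * catalan ab.2) := by
      rw [hS, ← Finset.sum_product']
      refine (Finset.sum_filter_of_ne ?_).symm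
      intro x _ hx
      by_contra hc
      push_neg at hc
      refine hx ?_
      rw [Nat.choose_eq_zero_of_lt (by omega), Nat.zero_mul]
    rw [hSrw]
    refine Finset.sum_nbij' (fun x => (x.2, x.1 - x.2)) (fun x => ⟨x.1 + x.2, x.1⟩) ?_ ?_ ?_ ?_ ?_
    · intro x hx
      simp only [Finset.mem_sigma, Finset.mem_range, Finset.mem_filter, Finset.mem_product] at hx ⊢
      omega
    · intro x hx
      simp only [Finset.mem_sigma, Finset.mem_range, Finset.mem_filter, Finset.mem_product] at hx ⊢
      omega
    · rintro ⟨k, i⟩ hx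
      simp only [Finset.mem_sigma, Finset.mem_range] at hx
      refine Sigma.ext (show i + (k - i) = k by omega) (show HEq i i from HEq.rfl)
    · rintro ⟨a, b⟩ hx
      show ((a : ℕ), a + b - a) = (a, b)
      simp
    · intro x hx
      simp only [Finset.mem_sigma, Finset.mem_range] at hx
      have h2 : 2 * x.2 + 2 * (x.1 - x.2) + 1 = 2 * x.1 + 1 := by omega
      rw [h2]
  -- Step A : the convolution sum = S
  have hA : ∑ j ∈ Finset.range n, Mz j * Mz (n-1-j) = S := by
    have h1 : ∀ j ∈ Finset.range n, Mz j * Mz (n-1-j)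
        = ∑ a ∈ Finset.range (n+1), ∑ b ∈ Finset.range (n+1),
            (Nat.choose j (2*a) * Nat.choose (n-1-j) (2*b)) * (catalan a * catalan b) := by
      intro j hj
      simp only [Finset.mem_range] at hj
      rw [Mz_ext (show j ≤ n by omega), Mz_ext (show n-1-j ≤ n by omega),
        Finset.sum_mul_sum]
      refine Finset.sum_congr rfl fun a _ => Finset.sum_congr rfl fun b _ => by ring
    rw [Finset.sum_congr rfl h1, Finset.sum_comm]
    refine Finset.sum_congr rfl fun a _ => ?_
    rw [Finset.sum_comm]
    refine Finset.sum_congr rfl fun b _ => ?_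
    rw [← Finset.sum_mul]
    have hv := choose_vdm (2*a) (2*b) (n-1)
    have hn1 : n - 1 + 1 = n := by omega
    rw [hn1] at hv
    rw [hv]
  omega

-- ##### basics

/-- total extension of a word -/
def V {n : ℕ} (p : Fin n → ℕ) : ℕ → ℕ := fun m => if h : m < n then p ⟨m, h⟩ else 0

lemma V_lt {n : ℕ} (p : Fin n → ℕ) {m : ℕ} (h : m < n) : V p m = p ⟨m, h⟩ := dif_pos h

lemma V_fin {n : ℕ} (p : Fin n → ℕ) (i : Fin n) : V p i = p i := by
  rw [V_lt p i.isLt]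

lemma V_ext {n : ℕ} {p q : Fin n → ℕ} (h : ∀ m < n, V p m = V q m) : p = q := by
  funext i
  have := h i i.isLt
  rwa [V_fin, V_fin] at this

lemma isPerm_bounds {n : ℕ} {p : Fin n → ℕ} (h : IsPerm p) (i : Fin n) :
    1 ≤ p i ∧ p i ≤ n := by
  have : p i ∈ Set.Icc 1 n := by rw [← h.2]; exact Set.mem_range_self i
  exact this

lemma perm_V_bounds {n : ℕ} {p : Fin n → ℕ} (h : IsPerm p) {m : ℕ} (hm : m < n) :
    1 ≤ V p m ∧ V p m ≤ n := by
  rw [V_lt p hm]; exact isPerm_bounds h _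

lemma perm_V_inj {n : ℕ} {p : Fin n → ℕ} (h : IsPerm p) {a b : ℕ} (ha : a < n) (hb : b < n)
    (hab : V p a = V p b) : a = b := by
  rw [V_lt p ha, V_lt p hb] at hab
  have := h.1 hab
  exact congrArg Fin.val this

lemma perm_V_surj {n : ℕ} {p : Fin n → ℕ} (h : IsPerm p) {m : ℕ} (h1 : 1 ≤ m) (h2 : m ≤ n) :
    ∃ i < n, V p i = m := by
  have : m ∈ Set.range p := by rw [h.2]; exact Set.mem_Icc.2 ⟨h1, h2⟩
  obtain ⟨i, hi⟩ := this
  exact ⟨i, i.isLt, by rw [V_fin]; exact hi⟩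

lemma isPerm_of_V {n : ℕ} {p : Fin n → ℕ}
    (hinj : ∀ a < n, ∀ b < n, V p a = V p b → a = b)
    (hb : ∀ m < n, 1 ≤ V p m ∧ V p m ≤ n)
    (hs : ∀ m, 1 ≤ m → m ≤ n → ∃ i < n, V p i = m) : IsPerm p := by
  constructor
  · intro a b hab
    have := hinj a a.isLt b b.isLt (by rw [V_fin, V_fin]; exact hab)
    exact Fin.ext this
  · ext m
    constructor
    · rintro ⟨i, rfl⟩
      have := hb i i.isLt
      rw [V_fin] at this
      exact Set.mem_Icc.2 this
    · intro hm
      rw [Set.mem_Icc] at hm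
      obtain ⟨i, hi, hVi⟩ := hs m hm.1 hm.2
      exact ⟨⟨i, hi⟩, by rw [← V_lt p hi]; exact hVi⟩

lemma finite_of_perm {n : ℕ} (Q : (Fin n → ℕ) → Prop) :
    Finite {p : Fin n → ℕ // IsPerm p ∧ Q p} := by
  classical
  let F : {p : Fin n → ℕ // IsPerm p ∧ Q p} → (Fin n → Fin (n+1)) := fun p i =>
    ⟨p.1 i, by have := (isPerm_bounds p.2.1 i).2; omega⟩
  have hF : Function.Injective F := by
    intro a b h
    apply Subtype.ext
    funext i
    have h2 := congrFun h i
    simpa [F, Fin.ext_iff] using h2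
  exact Finite.of_injective F hF

-- ##### characterizations

lemma containsOmega_iff {n : ℕ} (p : Fin n → ℕ) :
    ContainsOmega p ↔ ∃ i j : ℕ, i + 1 < j ∧ j < n ∧ V p (i+1) < V p i ∧ V p (i+1) = V p j + 1 := by
  constructor
  · rintro ⟨i, j, hi, hij, hdesc, hval⟩
    refine ⟨i, j, hij, j.isLt, ?_, ?_⟩
    · rw [V_lt p hi, V_lt p (by omega : (i:ℕ) < n), Fin.eta]
      exact hdesc
    · rw [V_lt p hi, V_fin]
      exact hval
  · rintro ⟨i, j, hij, hj, hdesc, hval⟩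
    have hi1 : i + 1 < n := by omega
    refine ⟨⟨i, by omega⟩, ⟨j, hj⟩, by simpa using hi1, by simpa using hij, ?_, ?_⟩
    · rw [V_lt p hi1, V_lt p (by omega : i < n)] at hdesc
      exact hdesc
    · rw [V_lt p hi1, V_lt p hj] at hval
      exact hval

lemma contains_of_three {n : ℕ} (x : Fin n → ℕ) (y : Fin 3 → ℕ) (a b c : ℕ)
    (hab : a < b) (hbc : b < c) (hc : c < n)
    (hiff : ∀ s t : Fin 3, y s < y t ↔
      (if (s:ℕ) = 0 then V x a else if (s:ℕ) = 1 then V x b else V x c) <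
      (if (t:ℕ) = 0 then V x a else if (t:ℕ) = 1 then V x b else V x c)) :
    Contains x y := by
  have ha : a < n := by omega
  have hb : b < n := by omega
  let g : Fin 3 → Fin n := fun s =>
    if (s:ℕ) = 0 then ⟨a, ha⟩ else if (s:ℕ) = 1 then ⟨b, hb⟩ else ⟨c, hc⟩
  have hgv : ∀ u : Fin 3, ((g u : ℕ)) = if (u:ℕ) = 0 then a else if (u:ℕ) = 1 then b else c := by
    intro u
    show ((if (u:ℕ) = 0 then (⟨a, ha⟩ : Fin n) else if (u:ℕ) = 1 then ⟨b, hb⟩ else ⟨c, hc⟩ : Fin n) : ℕ) = _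
    split_ifs <;> rfl
  have hgx : ∀ u : Fin 3, x (g u) = if (u:ℕ) = 0 then V x a else if (u:ℕ) = 1 then V x b else V x c := by
    intro u
    show x (if (u:ℕ) = 0 then (⟨a, ha⟩ : Fin n) else if (u:ℕ) = 1 then ⟨b, hb⟩ else ⟨c, hc⟩) = _
    split_ifs with h1 h2
    · rw [V_lt x ha]
    · rw [V_lt x hb]
    · rw [V_lt x hc]
  refine ⟨g, ?_, ?_⟩
  · intro s t hst
    have hst' : (s:ℕ) < (t:ℕ) := hst
    have hs3 : (s:ℕ) < 3 := s.isLt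
    have ht3 : (t:ℕ) < 3 := t.isLt
    rw [Fin.lt_def, hgv s, hgv t]
    split_ifs <;> omega
  · intro s t
    rw [hgx s, hgx t]
    exact hiff s t

lemma contains231_iff {n : ℕ} (x : Fin n → ℕ) :
    Contains x ![2,3,1] ↔ ∃ a b c : ℕ, a < b ∧ b < c ∧ c < n ∧
      V x c < V x a ∧ V x a < V x b := by
  constructor
  · rintro ⟨f, hf, hiff⟩
    refine ⟨f 0, f 1, f 2, hf (by decide), hf (by decide), (f 2).isLt, ?_, ?_⟩
    · rw [V_fin, V_fin]
      exact (hiff 2 0).1 (by decide)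
    · rw [V_fin, V_fin]
      exact (hiff 0 1).1 (by decide)
  · rintro ⟨a, b, c, hab, hbc, hc, h1, h2⟩
    refine contains_of_three x _ a b c hab hbc hc ?_
    have hy : ∀ u : Fin 3, (![2,3,1] : Fin 3 → ℕ) u
        = if (u:ℕ) = 0 then 2 else if (u:ℕ) = 1 then 3 else 1 := by decide
    intro s t
    rw [hy s, hy t]
    have hs3 : (s:ℕ) < 3 := s.isLt
    have ht3 : (t:ℕ) < 3 := t.isLt
    split_ifs <;> omega

lemma contains213_iff {n : ℕ} (x : Fin n → ℕ) :
    Contains x ![2,1,3] ↔ ∃ a b c : ℕ, a < b ∧ b < c ∧ c < n ∧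
      V x b < V x a ∧ V x a < V x c := by
  constructor
  · rintro ⟨f, hf, hiff⟩
    refine ⟨f 0, f 1, f 2, hf (by decide), hf (by decide), (f 2).isLt, ?_, ?_⟩
    · rw [V_fin, V_fin]
      exact (hiff 1 0).1 (by decide)
    · rw [V_fin, V_fin]
      exact (hiff 0 2).1 (by decide)
  · rintro ⟨a, b, c, hab, hbc, hc, h1, h2⟩
    refine contains_of_three x _ a b c hab hbc hc ?_
    have hy : ∀ u : Fin 3, (![2,1,3] : Fin 3 → ℕ) u
        = if (u:ℕ) = 0 then 2 else if (u:ℕ) = 1 then 1 else 3 := by decide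
    intro s t
    rw [hy s, hy t]
    have hs3 : (s:ℕ) < 3 := s.isLt
    have ht3 : (t:ℕ) < 3 := t.isLt
    split_ifs <;> omega

-- ##### glue for first value 1

def pOne {n : ℕ} (q : Fin n → ℕ) : Fin (n+1) → ℕ := fun i =>
  if (i:ℕ) = 0 then 1 else V q ((i:ℕ)-1) + 1

lemma pOne_V0 {n : ℕ} (q : Fin n → ℕ) : V (pOne q) 0 = 1 := by
  rw [V_lt _ (by omega : 0 < n+1)]
  rfl

lemma pOne_Vs {n : ℕ} (q : Fin n → ℕ) {m : ℕ} (h1 : 1 ≤ m) (h2 : m < n+1) :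
    V (pOne q) m = V q (m-1) + 1 := by
  rw [V_lt _ h2]
  show (if m = 0 then 1 else V q (m-1) + 1) = _
  rw [if_neg (by omega)]

lemma pOne_perm {n : ℕ} {q : Fin n → ℕ} (hq : IsPerm q) : IsPerm (pOne q) := by
  refine isPerm_of_V ?_ ?_ ?_
  · intro a ha b hb hab
    rcases Nat.eq_zero_or_pos a with ha0 | ha0 <;> rcases Nat.eq_zero_or_pos b with hb0 | hb0
    · omega
    · subst ha0
      rw [pOne_V0, pOne_Vs q hb0 hb] at hab
      have := (perm_V_bounds hq (show b-1 < n by omega)).1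
      omega
    · subst hb0
      rw [pOne_V0, pOne_Vs q ha0 ha] at hab
      have := (perm_V_bounds hq (show a-1 < n by omega)).1
      omega
    · rw [pOne_Vs q ha0 ha, pOne_Vs q hb0 hb] at hab
      have := perm_V_inj hq (show a-1 < n by omega) (show b-1 < n by omega) (by omega)
      omega
  · intro m hm
    rcases Nat.eq_zero_or_pos m with hm0 | hm0
    · subst hm0; rw [pOne_V0]; omega
    · rw [pOne_Vs q hm0 hm]
      have := perm_V_bounds hq (show m-1 < n by omega)
      omega
  · intro m h1 h2
    rcases Nat.eq_zero_or_pos (m-1) with hm0 | hm0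
    · exact ⟨0, by omega, by rw [pOne_V0]; omega⟩
    · obtain ⟨i, hi, hVi⟩ := perm_V_surj hq (show 1 ≤ m-1 by omega) (show m-1 ≤ n by omega)
      exact ⟨i+1, by omega, by rw [pOne_Vs q (by omega) (by omega), Nat.add_sub_cancel, hVi]; omega⟩

lemma pOne_omega_iff {n : ℕ} {q : Fin n → ℕ} (hq : IsPerm q) :
    ContainsOmega (pOne q) ↔ ContainsOmega q := by
  rw [containsOmega_iff, containsOmega_iff]
  constructor
  · rintro ⟨i, j, hij, hj, hdesc, hval⟩
    rcases Nat.eq_zero_or_pos i with hi0 | hi0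
    · subst hi0
      rw [pOne_V0, pOne_Vs q (by omega) (by omega)] at hdesc
      omega
    · rw [pOne_Vs q (by omega) (by omega), pOne_Vs q (by omega) (by omega)] at hdesc
      rw [pOne_Vs q (by omega) (by omega), pOne_Vs q (by omega) (by omega)] at hval
      refine ⟨i-1, j-1, by omega, by omega, ?_, ?_⟩
      · rw [show i - 1 + 1 = (i+1) - 1 by omega]
        omega
      · rw [show i - 1 + 1 = (i+1) - 1 by omega]
        omega
  · rintro ⟨i, j, hij, hj, hdesc, hval⟩
    refine ⟨i+1, j+1, by omega, by omega, ?_, ?_⟩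
    · rw [pOne_Vs q (by omega) (by omega), pOne_Vs q (by omega) (by omega)]
      simp only [Nat.add_sub_cancel]
      omega
    · rw [pOne_Vs q (by omega) (by omega), pOne_Vs q (by omega) (by omega)]
      simp only [Nat.add_sub_cancel]
      omega

lemma pOne_contains_iff {n : ℕ} {q : Fin n → ℕ} (hq : IsPerm q) {y : Fin 3 → ℕ}
    (hy : y = ![2, 1, 3] ∨ y = ![2, 3, 1]) :
    Contains (pOne q) y ↔ Contains q y := by
  rcases hy with hy | hy <;> subst hy
  · rw [contains213_iff, contains213_iff]
    constructor
    · rintro ⟨a, b, c, hab, hbc, hc, h1, h2⟩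
      rcases Nat.eq_zero_or_pos a with ha0 | ha0
      · subst ha0
        rw [pOne_V0, pOne_Vs q (by omega) (by omega)] at h1
        omega
      · rw [pOne_Vs q (by omega) (by omega), pOne_Vs q (by omega) (by omega)] at h1
        rw [pOne_Vs q (by omega) (by omega), pOne_Vs q (by omega) (by omega)] at h2
        exact ⟨a-1, b-1, c-1, by omega, by omega, by omega, by omega, by omega⟩
    · rintro ⟨a, b, c, hab, hbc, hc, h1, h2⟩
      refine ⟨a+1, b+1, c+1, by omega, by omega, by omega, ?_, ?_⟩ <;>
        rw [pOne_Vs q (by omega) (by omega), pOne_Vs q (by omega) (by omega)] <;>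
        simp only [Nat.add_sub_cancel] <;> omega
  · rw [contains231_iff, contains231_iff]
    constructor
    · rintro ⟨a, b, c, hab, hbc, hc, h1, h2⟩
      rcases Nat.eq_zero_or_pos a with ha0 | ha0
      · subst ha0
        rw [pOne_V0, pOne_Vs q (by omega) (by omega)] at h1
        omega
      · rw [pOne_Vs q (by omega) (by omega), pOne_Vs q (by omega) (by omega)] at h1
        rw [pOne_Vs q (by omega) (by omega), pOne_Vs q (by omega) (by omega)] at h2
        exact ⟨a-1, b-1, c-1, by omega, by omega, by omega, by omega, by omega⟩
    · rintro ⟨a, b, c, hab, hbc, hc, h1, h2⟩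
      refine ⟨a+1, b+1, c+1, by omega, by omega, by omega, ?_, ?_⟩ <;>
        rw [pOne_Vs q (by omega) (by omega), pOne_Vs q (by omega) (by omega)] <;>
        simp only [Nat.add_sub_cancel] <;> omega

lemma fib_one_card (y : Fin 3 → ℕ) (hy : y = ![2, 1, 3] ∨ y = ![2, 3, 1]) (n : ℕ) :
    Nat.card {p : Fin (n+1) → ℕ //
        (IsPerm p ∧ ¬ ContainsOmega p ∧ Avoids p y) ∧ V p 0 = 1}
      = Nat.card {q : Fin n → ℕ // IsPerm q ∧ ¬ ContainsOmega q ∧ Avoids q y} := by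
  refine (Nat.card_congr (Equiv.ofBijective
    (fun q : {q : Fin n → ℕ // IsPerm q ∧ ¬ ContainsOmega q ∧ Avoids q y} =>
      (⟨pOne q.1, ⟨pOne_perm q.2.1,
        fun h => q.2.2.1 ((pOne_omega_iff q.2.1).1 h),
        fun h => q.2.2.2 ((pOne_contains_iff q.2.1 hy).1 h)⟩, pOne_V0 q.1⟩ :
        {p : Fin (n+1) → ℕ // (IsPerm p ∧ ¬ ContainsOmega p ∧ Avoids p y) ∧ V p 0 = 1}))
    ⟨?_, ?_⟩)).symm
  · intro q q' h
    have h2 : pOne q.1 = pOne q'.1 := congrArg Subtype.val h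
    apply Subtype.ext
    refine V_ext fun m hm => ?_
    have e1 : V (pOne q.1) (m+1) = V (pOne q'.1) (m+1) := by rw [h2]
    rw [pOne_Vs q.1 (by omega) (by omega), pOne_Vs q'.1 (by omega) (by omega)] at e1
    simp only [Nat.add_sub_cancel] at e1
    omega
  · rintro ⟨p, ⟨hp, hΩ, hA⟩, h0⟩
    -- extraction
    have hval2 : ∀ m, 1 ≤ m → m < n+1 → 2 ≤ V p m ∧ V p m ≤ n+1 := by
      intro m h1 h2
      have hb := perm_V_bounds hp h2
      have : V p m ≠ 1 := by
        intro hc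
        have := perm_V_inj hp h2 (by omega : 0 < n+1) (by rw [hc, h0])
        omega
      omega
    set q : Fin n → ℕ := fun j => V p ((j:ℕ)+1) - 1 with hqdef
    have hqV : ∀ m, m < n → V q m = V p (m+1) - 1 := by
      intro m hm
      rw [V_lt _ hm]
    have hqperm : IsPerm q := by
      refine isPerm_of_V ?_ ?_ ?_
      · intro a ha b hb hab
        rw [hqV a ha, hqV b hb] at hab
        have h1 := hval2 (a+1) (by omega) (by omega)
        have h2 := hval2 (b+1) (by omega) (by omega)
        have := perm_V_inj hp (show a+1 < n+1 by omega) (show b+1 < n+1 by omega) (by omega)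
        omega
      · intro m hm
        rw [hqV m hm]
        have := hval2 (m+1) (by omega) (by omega)
        omega
      · intro m h1 h2
        obtain ⟨i, hi, hVi⟩ := perm_V_surj hp (show 1 ≤ m+1 by omega) (show m+1 ≤ n+1 by omega)
        have hi0 : i ≠ 0 := by
          intro hc
          subst hc
          rw [h0] at hVi
          omega
        exact ⟨i-1, by omega, by rw [hqV (i-1) (by omega), show i-1+1 = i by omega, hVi]; omega⟩
    have hpq : pOne q = p := by
      refine V_ext fun m hm => ?_
      rcases Nat.eq_zero_or_pos m with hm0 | hm0
      · subst hm0
        rw [pOne_V0, h0]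
      · rw [pOne_Vs q hm0 hm, hqV (m-1) (by omega), show m-1+1 = m by omega]
        have := hval2 m hm0 hm
        omega
    refine ⟨⟨q, hqperm, ?_, ?_⟩, Subtype.ext hpq⟩
    · intro h
      exact hΩ (by rw [← hpq]; exact (pOne_omega_iff hqperm).2 h)
    · intro h
      exact hA (by rw [← hpq]; exact (pOne_contains_iff hqperm hy).2 h)

-- ##### glue for 231, first value w ≥ 2

def pA (N w : ℕ) (q1 : Fin (w-2) → ℕ) (q2 : Fin (N-w) → ℕ) : Fin N → ℕ := fun i =>
  if (i:ℕ) = 0 then w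
  else if (i:ℕ) = 1 then 1
  else if (i:ℕ) < w then V q1 ((i:ℕ)-2) + 1
  else V q2 ((i:ℕ)-w) + w

section GA

variable {N w : ℕ} {q1 : Fin (w-2) → ℕ} {q2 : Fin (N-w) → ℕ}

lemma pA_V0 (h0 : 0 < N) : V (pA N w q1 q2) 0 = w := by
  rw [V_lt _ h0]; rfl

lemma pA_V1 (h1 : 1 < N) : V (pA N w q1 q2) 1 = 1 := by
  rw [V_lt _ h1]
  show (if (1:ℕ) = 0 then w else if (1:ℕ) = 1 then 1
    else if (1:ℕ) < w then V q1 (1-2) + 1 else V q2 (1-w) + w) = 1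
  norm_num

lemma pA_VM {m : ℕ} (h2 : 2 ≤ m) (hm : m < w) (hN : w ≤ N) :
    V (pA N w q1 q2) m = V q1 (m-2) + 1 := by
  rw [V_lt _ (by omega)]
  show (if m = 0 then w else if m = 1 then 1
    else if m < w then V q1 (m-2) + 1 else V q2 (m-w) + w) = _
  rw [if_neg (by omega), if_neg (by omega), if_pos hm]

lemma pA_VR {m : ℕ} (hm : w ≤ m) (hN : m < N) (hw : 2 ≤ w) :
    V (pA N w q1 q2) m = V q2 (m-w) + w := by
  rw [V_lt _ hN]
  show (if m = 0 then w else if m = 1 then 1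
    else if m < w then V q1 (m-2) + 1 else V q2 (m-w) + w) = _
  rw [if_neg (by omega), if_neg (by omega), if_neg (by omega)]

variable (hw : 2 ≤ w) (hwN : w ≤ N) (hq1 : IsPerm q1) (hq2 : IsPerm q2)
include hw hwN hq1 hq2

lemma pA_classify : ∀ m < N,
    (m = 0 ∧ V (pA N w q1 q2) m = w) ∨
    (m = 1 ∧ V (pA N w q1 q2) m = 1) ∨
    (2 ≤ m ∧ m < w ∧ V (pA N w q1 q2) m = V q1 (m-2) + 1 ∧
      2 ≤ V (pA N w q1 q2) m ∧ V (pA N w q1 q2) m ≤ w-1) ∨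
    (w ≤ m ∧ V (pA N w q1 q2) m = V q2 (m-w) + w ∧
      w+1 ≤ V (pA N w q1 q2) m ∧ V (pA N w q1 q2) m ≤ N) := by
  intro m hm
  rcases Nat.eq_zero_or_pos m with h0 | h0
  · left; exact ⟨h0, by rw [h0, pA_V0 (by omega)]⟩
  rcases Nat.eq_or_lt_of_le h0 with h1 | h1
  · right; left; exact ⟨h1.symm, by rw [← h1, pA_V1 (by omega)]⟩
  rcases lt_or_ge m w with hMw | hMw
  · right; right; left
    have he := pA_VM (q1 := q1) (q2 := q2) (by omega) hMw hwN
    have hb := perm_V_bounds hq1 (show m-2 < w-2 by omega)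
    exact ⟨by omega, hMw, he, by omega, by omega⟩
  · right; right; right
    have he := pA_VR (q1 := q1) (q2 := q2) hMw hm hw
    have hb := perm_V_bounds hq2 (show m-w < N-w by omega)
    exact ⟨hMw, he, by omega, by omega⟩

lemma pA_perm : IsPerm (pA N w q1 q2) := by
  have hcl := pA_classify hw hwN hq1 hq2
  refine isPerm_of_V ?_ ?_ ?_
  · intro a ha b hb hab
    rcases hcl a ha with ⟨e1,e2⟩|⟨e1,e2⟩|⟨e1,e2,e3,e4,e5⟩|⟨e1,e2,e3,e4⟩ <;>
      rcases hcl b hb with ⟨f1,f2⟩|⟨f1,f2⟩|⟨f1,f2,f3,f4,f5⟩|⟨f1,f2,f3,f4⟩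
    · omega
    · omega
    · omega
    · omega
    · omega
    · omega
    · omega
    · omega
    · omega
    · omega
    · have := perm_V_inj hq1 (show a-2 < w-2 by omega) (show b-2 < w-2 by omega) (by omega)
      omega
    · omega
    · omega
    · omega
    · omega
    · have := perm_V_inj hq2 (show a-w < N-w by omega) (show b-w < N-w by omega) (by omega)
      omega
  · intro m hm
    rcases hcl m hm with ⟨e1,e2⟩|⟨e1,e2⟩|⟨e1,e2,e3,e4,e5⟩|⟨e1,e2,e3,e4⟩ <;> omega
  · intro m h1 h2
    rcases Nat.eq_or_lt_of_le h1 with hm1 | hm1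
    · exact ⟨1, by omega, by rw [pA_V1 (by omega)]; omega⟩
    rcases Nat.lt_trichotomy m w with hmw | hmw | hmw
    · obtain ⟨i, hi, hVi⟩ := perm_V_surj hq1 (show 1 ≤ m-1 by omega) (show m-1 ≤ w-2 by omega)
      refine ⟨i+2, by omega, ?_⟩
      rw [pA_VM (by omega) (by omega) hwN, Nat.add_sub_cancel, hVi]
      omega
    · exact ⟨0, by omega, by rw [pA_V0 (by omega)]; omega⟩
    · obtain ⟨i, hi, hVi⟩ := perm_V_surj hq2 (show 1 ≤ m-w by omega) (show m-w ≤ N-w by omega)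
      refine ⟨i+w, by omega, ?_⟩
      rw [pA_VR (by omega) (by omega) hw, Nat.add_sub_cancel, hVi]
      omega

lemma pA_omega_iff :
    ContainsOmega (pA N w q1 q2) ↔ ContainsOmega q1 ∨ ContainsOmega q2 := by
  have hcl := pA_classify hw hwN hq1 hq2
  rw [containsOmega_iff]
  constructor
  · rintro ⟨i, j, hij, hj, hdesc, hval⟩
    rcases hcl (i+1) (by omega) with ⟨e1,e2⟩|⟨e1,e2⟩|⟨e1,e2,e3,e4,e5⟩|⟨e1,e2,e3,e4⟩
    · omega
    · rcases hcl j (by omega) with ⟨f1,f2⟩|⟨f1,f2⟩|⟨f1,f2,f3,f4,f5⟩|⟨f1,f2,f3,f4⟩ <;> omega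
    · -- i+1 in M
      left
      rw [containsOmega_iff]
      have hjM : 2 ≤ j ∧ j < w ∧ V (pA N w q1 q2) j = V q1 (j-2) + 1 := by
        rcases hcl j (by omega) with ⟨f1,f2⟩|⟨f1,f2⟩|⟨f1,f2,f3,f4,f5⟩|⟨f1,f2,f3,f4⟩ <;>
          first | omega | exact ⟨f1, f2, f3⟩
      have hiM : 2 ≤ i ∧ i < w ∧ V (pA N w q1 q2) i = V q1 (i-2) + 1 := by
        rcases hcl i (by omega) with ⟨f1,f2⟩|⟨f1,f2⟩|⟨f1,f2,f3,f4,f5⟩|⟨f1,f2,f3,f4⟩ <;>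
          first | omega | exact ⟨f1, f2, f3⟩
      refine ⟨i-2, j-2, by omega, by omega, ?_, ?_⟩
      · rw [show i-2+1 = (i+1)-2 by omega]
        omega
      · rw [show i-2+1 = (i+1)-2 by omega]
        omega
    · -- i+1 in R
      right
      rw [containsOmega_iff]
      have hjR : w ≤ j ∧ V (pA N w q1 q2) j = V q2 (j-w) + w := by
        rcases hcl j (by omega) with ⟨f1,f2⟩|⟨f1,f2⟩|⟨f1,f2,f3,f4,f5⟩|⟨f1,f2,f3,f4⟩ <;>
          first | omega | exact ⟨f1, f2⟩
      have hiR : w ≤ i ∧ V (pA N w q1 q2) i = V q2 (i-w) + w := by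
        rcases hcl i (by omega) with ⟨f1,f2⟩|⟨f1,f2⟩|⟨f1,f2,f3,f4,f5⟩|⟨f1,f2,f3,f4⟩ <;>
          first | omega | exact ⟨f1, f2⟩
      refine ⟨i-w, j-w, by omega, by omega, ?_, ?_⟩
      · rw [show i-w+1 = (i+1)-w by omega]
        omega
      · rw [show i-w+1 = (i+1)-w by omega]
        omega
  · rintro (h | h)
    · rw [containsOmega_iff] at h
      obtain ⟨i, j, hij, hjlt, hdesc, hval⟩ := h
      have e1 := pA_VM (q1 := q1) (q2 := q2) (show 2 ≤ i+2 by omega) (show i+2 < w by omega) hwN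
      have e2 := pA_VM (q1 := q1) (q2 := q2) (show 2 ≤ (i+1)+2 by omega) (show (i+1)+2 < w by omega) hwN
      have e3 := pA_VM (q1 := q1) (q2 := q2) (show 2 ≤ j+2 by omega) (show j+2 < w by omega) hwN
      simp only [Nat.add_sub_cancel] at e1 e2 e3
      refine ⟨i+2, j+2, by omega, by omega, ?_, ?_⟩ <;>
      · rw [show i+2+1 = (i+1)+2 by omega]
        omega
    · rw [containsOmega_iff] at h
      obtain ⟨i, j, hij, hjlt, hdesc, hval⟩ := h
      have e1 := pA_VR (q1 := q1) (q2 := q2) (show w ≤ i+w by omega) (show i+w < N by omega) hw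
      have e2 := pA_VR (q1 := q1) (q2 := q2) (show w ≤ (i+1)+w by omega) (show (i+1)+w < N by omega) hw
      have e3 := pA_VR (q1 := q1) (q2 := q2) (show w ≤ j+w by omega) (show j+w < N by omega) hw
      simp only [Nat.add_sub_cancel] at e1 e2 e3
      refine ⟨i+w, j+w, by omega, by omega, ?_, ?_⟩ <;>
      · rw [show i+w+1 = (i+1)+w by omega]
        omega

lemma pA_contains_iff :
    Contains (pA N w q1 q2) ![2,3,1] ↔ Contains q1 ![2,3,1] ∨ Contains q2 ![2,3,1] := by
  have hcl := pA_classify hw hwN hq1 hq2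
  rw [contains231_iff]
  constructor
  · rintro ⟨a, b, c, hab, hbc, hc, h1, h2⟩
    rcases hcl a (by omega) with ⟨e1,e2⟩|⟨e1,e2⟩|⟨e1,e2,e3,e4,e5⟩|⟨e1,e2,e3,e4⟩
    · -- a = 0 : V p a = w, V p b > w so b in R, V p c < w so c ≤ w-1 < b : contra
      rcases hcl b (by omega) with ⟨f1,f2⟩|⟨f1,f2⟩|⟨f1,f2,f3,f4,f5⟩|⟨f1,f2,f3,f4⟩ <;>
        rcases hcl c hc with ⟨g1,g2⟩|⟨g1,g2⟩|⟨g1,g2,g3,g4,g5⟩|⟨g1,g2,g3,g4⟩ <;> omega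
    · -- a = 1 : V p a = 1, V p c < 1 impossible
      rcases hcl c hc with ⟨g1,g2⟩|⟨g1,g2⟩|⟨g1,g2,g3,g4,g5⟩|⟨g1,g2,g3,g4⟩ <;> omega
    · -- a in M
      left
      rw [contains231_iff]
      have hcM : 2 ≤ c ∧ c < w ∧ V (pA N w q1 q2) c = V q1 (c-2) + 1 := by
        rcases hcl c hc with ⟨g1,g2⟩|⟨g1,g2⟩|⟨g1,g2,g3,g4,g5⟩|⟨g1,g2,g3,g4⟩ <;>
          first | omega | exact ⟨g1, g2, g3⟩
      have hbM : 2 ≤ b ∧ b < w ∧ V (pA N w q1 q2) b = V q1 (b-2) + 1 := by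
        rcases hcl b (by omega) with ⟨g1,g2⟩|⟨g1,g2⟩|⟨g1,g2,g3,g4,g5⟩|⟨g1,g2,g3,g4⟩ <;>
          first | omega | exact ⟨g1, g2, g3⟩
      exact ⟨a-2, b-2, c-2, by omega, by omega, by omega, by omega, by omega⟩
    · -- a in R
      right
      rw [contains231_iff]
      have hbR : w ≤ b ∧ V (pA N w q1 q2) b = V q2 (b-w) + w := by
        rcases hcl b (by omega) with ⟨g1,g2⟩|⟨g1,g2⟩|⟨g1,g2,g3,g4,g5⟩|⟨g1,g2,g3,g4⟩ <;>
          first | omega | exact ⟨g1, g2⟩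
      have hcR : w ≤ c ∧ V (pA N w q1 q2) c = V q2 (c-w) + w := by
        rcases hcl c hc with ⟨g1,g2⟩|⟨g1,g2⟩|⟨g1,g2,g3,g4,g5⟩|⟨g1,g2,g3,g4⟩ <;>
          first | omega | exact ⟨g1, g2⟩
      exact ⟨a-w, b-w, c-w, by omega, by omega, by omega, by omega, by omega⟩
  · rintro (h | h)
    · rw [contains231_iff] at h
      obtain ⟨a, b, c, hab, hbc, hc, h1, h2⟩ := h
      have e1 := pA_VM (q1 := q1) (q2 := q2) (show 2 ≤ a+2 by omega) (show a+2 < w by omega) hwN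
      have e2 := pA_VM (q1 := q1) (q2 := q2) (show 2 ≤ b+2 by omega) (show b+2 < w by omega) hwN
      have e3 := pA_VM (q1 := q1) (q2 := q2) (show 2 ≤ c+2 by omega) (show c+2 < w by omega) hwN
      simp only [Nat.add_sub_cancel] at e1 e2 e3
      refine ⟨a+2, b+2, c+2, by omega, by omega, by omega, ?_, ?_⟩ <;> omega
    · rw [contains231_iff] at h
      obtain ⟨a, b, c, hab, hbc, hc, h1, h2⟩ := h
      have e1 := pA_VR (q1 := q1) (q2 := q2) (show w ≤ a+w by omega) (show a+w < N by omega) hw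
      have e2 := pA_VR (q1 := q1) (q2 := q2) (show w ≤ b+w by omega) (show b+w < N by omega) hw
      have e3 := pA_VR (q1 := q1) (q2 := q2) (show w ≤ c+w by omega) (show c+w < N by omega) hw
      simp only [Nat.add_sub_cancel] at e1 e2 e3
      refine ⟨a+w, b+w, c+w, by omega, by omega, by omega, ?_, ?_⟩ <;> omega

end GA

-- ##### initial segment counting

lemma initial_segment {N K : ℕ} (P : ℕ → Prop) [DecidablePred P]
    (hcard : ((Finset.range N).filter (fun i => 1 ≤ i ∧ P i)).card = K)
    (hdc : ∀ s t, 1 ≤ s → s < t → t < N → P t → P s) :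
    ∀ m, 1 ≤ m → m < N → (P m ↔ m ≤ K) := by
  intro m h1 hm
  constructor
  · intro hPm
    by_contra hc
    push_neg at hc
    have hsub : Finset.Icc 1 m ⊆ (Finset.range N).filter (fun i => 1 ≤ i ∧ P i) := by
      intro s hs
      simp only [Finset.mem_Icc] at hs
      simp only [Finset.mem_filter, Finset.mem_range]
      refine ⟨by omega, hs.1, ?_⟩
      rcases Nat.eq_or_lt_of_le hs.2 with h | h
      · exact h ▸ hPm
      · exact hdc s m hs.1 h hm hPm
    have hle := Finset.card_le_card hsub
    rw [hcard, Nat.card_Icc] at hle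
    omega
  · intro hmK
    by_contra hPm
    have hsub : (Finset.range N).filter (fun i => 1 ≤ i ∧ P i) ⊆ Finset.Ico 1 m := by
      intro t ht
      simp only [Finset.mem_filter, Finset.mem_range] at ht
      simp only [Finset.mem_Ico]
      refine ⟨ht.2.1, ?_⟩
      by_contra hc
      push_neg at hc
      rcases Nat.eq_or_lt_of_le hc with h | h
      · exact hPm (h ▸ ht.2.2)
      · exact hPm (hdc m t h1 h ht.1 ht.2.2)
    have hle := Finset.card_le_card hsub
    rw [hcard, Nat.card_Ico] at hle
    omega

-- ##### structure of 231&omega avoiders with first value w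

lemma struct231 {N w : ℕ} {p : Fin N → ℕ} (hp : IsPerm p) (hOm : ¬ ContainsOmega p)
    (hA : Avoids p ![2,3,1]) (hw : 2 ≤ w) (hwN : w ≤ N) (h0 : V p 0 = w) :
    (∀ m, 1 ≤ m → m < N → (V p m < w ↔ m ≤ w - 1)) ∧ V p 1 = 1 := by
  classical
  have hNw : ∀ m, 1 ≤ m → m < N → V p m ≠ w := by
    intro m h1 h2 hc
    have := perm_V_inj hp h2 (by omega : 0 < N) (by rw [hc, h0])
    omega
  have hdc : ∀ s t, 1 ≤ s → s < t → t < N → V p t < w → V p s < w := by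
    intro s t h1 hst ht hVt
    by_contra hc
    push_neg at hc
    have hs : w < V p s := by
      have := hNw s h1 (by omega)
      omega
    refine hA ((contains231_iff p).2 ⟨0, s, t, by omega, hst, ht, by omega, by omega⟩)
  have hcard : ((Finset.range N).filter (fun i => 1 ≤ i ∧ V p i < w)).card = w - 1 := by
    rw [show w - 1 = (Finset.Icc 1 (w-1)).card by rw [Nat.card_Icc]; omega]
    refine Finset.card_bij (fun a _ => V p a) ?_ ?_ ?_
    · intro a ha
      simp only [Finset.mem_filter, Finset.mem_range] at ha
      simp only [Finset.mem_Icc]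
      have := (perm_V_bounds hp ha.1).1
      omega
    · intro a ha b hb hab
      simp only [Finset.mem_filter, Finset.mem_range] at ha hb
      exact perm_V_inj hp ha.1 hb.1 hab
    · intro b hb
      simp only [Finset.mem_Icc] at hb
      obtain ⟨i, hi, hVi⟩ := perm_V_surj hp hb.1 (by omega)
      have hi1 : 1 ≤ i := by
        rcases Nat.eq_zero_or_pos i with h | h
        · rw [h, h0] at hVi; omega
        · omega
      exact ⟨i, by simp only [Finset.mem_filter, Finset.mem_range]; exact ⟨hi, hi1, by omega⟩, hVi⟩
  have hSL1 := initial_segment (fun i => V p i < w) hcard hdc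
  refine ⟨hSL1, ?_⟩
  have h1N : 1 < N := by omega
  have hb1 := perm_V_bounds hp h1N
  by_contra hne
  have hu : 2 ≤ V p 1 := by omega
  have huw : V p 1 < w := (hSL1 1 (by omega) h1N).2 (by omega)
  obtain ⟨j, hj, hVj⟩ := perm_V_surj hp (show 1 ≤ V p 1 - 1 by omega) (by omega)
  have hj0 : j ≠ 0 := by
    intro hc
    rw [hc, h0] at hVj
    omega
  have hj1 : j ≠ 1 := by
    intro hc
    rw [hc] at hVj
    omega
  refine hOm ((containsOmega_iff p).2 ⟨0, j, by omega, hj, ?_, ?_⟩) <;>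
    simp only [Nat.zero_add, h0] <;> omega

-- ##### fiber cardinality for 231, first value w

lemma fib_big_card_231 (N w : ℕ) (hw : 2 ≤ w) (hwN : w ≤ N) :
    Nat.card {p : Fin N → ℕ //
        (IsPerm p ∧ ¬ ContainsOmega p ∧ Avoids p ![2,3,1]) ∧ V p 0 = w}
      = Nat.card {q : Fin (w-2) → ℕ // IsPerm q ∧ ¬ ContainsOmega q ∧ Avoids q ![2,3,1]}
        * Nat.card {q : Fin (N-w) → ℕ // IsPerm q ∧ ¬ ContainsOmega q ∧ Avoids q ![2,3,1]} := by
  rw [← Nat.card_prod]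
  refine (Nat.card_congr (Equiv.ofBijective
    (fun qq : {q : Fin (w-2) → ℕ // IsPerm q ∧ ¬ ContainsOmega q ∧ Avoids q ![2,3,1]}
        × {q : Fin (N-w) → ℕ // IsPerm q ∧ ¬ ContainsOmega q ∧ Avoids q ![2,3,1]} =>
      (⟨pA N w qq.1.1 qq.2.1, ⟨pA_perm hw hwN qq.1.2.1 qq.2.2.1,
        fun h => by
          rcases (pA_omega_iff hw hwN qq.1.2.1 qq.2.2.1).1 h with h | h
          · exact qq.1.2.2.1 h
          · exact qq.2.2.2.1 h,
        fun h => by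
          rcases (pA_contains_iff hw hwN qq.1.2.1 qq.2.2.1).1 h with h | h
          · exact qq.1.2.2.2 h
          · exact qq.2.2.2.2 h⟩, pA_V0 (by omega)⟩ :
      {p : Fin N → ℕ // (IsPerm p ∧ ¬ ContainsOmega p ∧ Avoids p ![2,3,1]) ∧ V p 0 = w}))
    ⟨?_, ?_⟩)).symm
  · intro qq qq' h
    have h2 : pA N w qq.1.1 qq.2.1 = pA N w qq'.1.1 qq'.2.1 := congrArg Subtype.val h
    have e1 : qq.1.1 = qq'.1.1 := by
      refine V_ext fun m hm => ?_
      have a1 := pA_VM (q1 := qq.1.1) (q2 := qq.2.1) (show 2 ≤ m+2 by omega)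
        (show m+2 < w by omega) hwN
      have a2 := pA_VM (q1 := qq'.1.1) (q2 := qq'.2.1) (show 2 ≤ m+2 by omega)
        (show m+2 < w by omega) hwN
      rw [h2] at a1
      simp only [Nat.add_sub_cancel] at a1 a2
      omega
    have e2 : qq.2.1 = qq'.2.1 := by
      refine V_ext fun m hm => ?_
      have a1 := pA_VR (q1 := qq.1.1) (q2 := qq.2.1) (show w ≤ m+w by omega)
        (show m+w < N by omega) hw
      have a2 := pA_VR (q1 := qq'.1.1) (q2 := qq'.2.1) (show w ≤ m+w by omega)
        (show m+w < N by omega) hw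
      rw [h2] at a1
      simp only [Nat.add_sub_cancel] at a1 a2
      omega
    exact Prod.ext (Subtype.ext e1) (Subtype.ext e2)
  · rintro ⟨p, ⟨hp, hOm, hA⟩, h0⟩
    obtain ⟨hSL1, hSL2⟩ := struct231 hp hOm hA hw hwN h0
    have hNw : ∀ m, 1 ≤ m → m < N → V p m ≠ w := by
      intro m h1 h2 hc
      have := perm_V_inj hp h2 (by omega : 0 < N) (by rw [hc, h0])
      omega
    have hMv : ∀ m, 2 ≤ m → m < w → 2 ≤ V p m ∧ V p m ≤ w-1 := by
      intro m h2 hmw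
      have hb := perm_V_bounds hp (show m < N by omega)
      have hlt := (hSL1 m (by omega) (by omega)).2 (by omega)
      have hne1 : V p m ≠ 1 := by
        intro hc
        have := perm_V_inj hp (show m < N by omega) (show 1 < N by omega)
          (by rw [hc, hSL2])
        omega
      omega
    have hRv : ∀ m, w ≤ m → m < N → w+1 ≤ V p m ∧ V p m ≤ N := by
      intro m hmw h2
      have hb := perm_V_bounds hp h2
      have hge : ¬ (V p m < w) := by
        intro hc
        have := (hSL1 m (by omega) h2).1 hc
        omega
      have := hNw m (by omega) h2
      omega
    set q1 : Fin (w-2) → ℕ := fun j => V p ((j:ℕ)+2) - 1 with hq1def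
    set q2 : Fin (N-w) → ℕ := fun j => V p ((j:ℕ)+w) - w with hq2def
    have hq1V : ∀ m, m < w-2 → V q1 m = V p (m+2) - 1 := fun m hm => by
      rw [V_lt _ hm]
    have hq2V : ∀ m, m < N-w → V q2 m = V p (m+w) - w := fun m hm => by
      rw [V_lt _ hm]
    have hq1perm : IsPerm q1 := by
      refine isPerm_of_V ?_ ?_ ?_
      · intro a ha b hb hab
        rw [hq1V a ha, hq1V b hb] at hab
        have m1 := hMv (a+2) (by omega) (by omega)
        have m2 := hMv (b+2) (by omega) (by omega)
        have := perm_V_inj hp (show a+2 < N by omega) (show b+2 < N by omega) (by omega)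
        omega
      · intro m hm
        rw [hq1V m hm]
        have := hMv (m+2) (by omega) (by omega)
        omega
      · intro m h1 h2
        obtain ⟨i, hi, hVi⟩ := perm_V_surj hp (show 1 ≤ m+1 by omega) (by omega)
        have hi0 : i ≠ 0 := by
          intro hc; rw [hc, h0] at hVi; omega
        have hi1 : i ≠ 1 := by
          intro hc; rw [hc, hSL2] at hVi; omega
        have hiw : i ≤ w - 1 := (hSL1 i (by omega) hi).1 (by omega)
        refine ⟨i-2, by omega, ?_⟩
        rw [hq1V (i-2) (by omega), show i-2+2 = i by omega, hVi]
        omega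
    have hq2perm : IsPerm q2 := by
      refine isPerm_of_V ?_ ?_ ?_
      · intro a ha b hb hab
        rw [hq2V a ha, hq2V b hb] at hab
        have m1 := hRv (a+w) (by omega) (by omega)
        have m2 := hRv (b+w) (by omega) (by omega)
        have := perm_V_inj hp (show a+w < N by omega) (show b+w < N by omega) (by omega)
        omega
      · intro m hm
        rw [hq2V m hm]
        have := hRv (m+w) (by omega) (by omega)
        omega
      · intro m h1 h2
        obtain ⟨i, hi, hVi⟩ := perm_V_surj hp (show 1 ≤ m+w by omega) (by omega)
        have hi0 : i ≠ 0 := by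
          intro hc; rw [hc, h0] at hVi; omega
        have hiw : ¬ (i ≤ w - 1) := by
          intro hc
          have := (hSL1 i (by omega) hi).2 hc
          omega
        refine ⟨i-w, by omega, ?_⟩
        rw [hq2V (i-w) (by omega), show i-w+w = i by omega, hVi]
        omega
    have hgl : pA N w q1 q2 = p := by
      refine V_ext fun m hm => ?_
      rcases Nat.eq_zero_or_pos m with hm0 | hm0
      · rw [hm0, pA_V0 (by omega), h0]
      rcases Nat.eq_or_lt_of_le hm0 with hm1 | hm1
      · rw [← hm1, pA_V1 (by omega), hSL2]
      rcases lt_or_ge m w with hmw | hmw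
      · rw [pA_VM (by omega) hmw hwN, hq1V (m-2) (by omega), show m-2+2 = m by omega]
        have := hMv m (by omega) hmw
        omega
      · rw [pA_VR hmw hm hw, hq2V (m-w) (by omega), show m-w+w = m by omega]
        have := hRv m hmw hm
        omega
    have hOmq := fun h => hOm (hgl ▸ (pA_omega_iff hw hwN hq1perm hq2perm).2 h)
    have hAq := fun h => hA (hgl ▸ (pA_contains_iff hw hwN hq1perm hq2perm).2 h)
    exact ⟨⟨⟨q1, hq1perm, fun h => hOmq (Or.inl h), fun h => hAq (Or.inl h)⟩,
      ⟨q2, hq2perm, fun h => hOmq (Or.inr h), fun h => hAq (Or.inr h)⟩⟩,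
      Subtype.ext hgl⟩

-- ##### glue for 213, first value w ≥ 2

def pB (N w : ℕ) (q1 : Fin (w-2) → ℕ) (q2 : Fin (N-w) → ℕ) : Fin N → ℕ := fun i =>
  if (i:ℕ) = 0 then w
  else if (i:ℕ) ≤ N - w then V q2 ((i:ℕ)-1) + w
  else if (i:ℕ) = N - w + 1 then 1
  else V q1 ((i:ℕ) - (N-w+2)) + 1

section GB

variable {N w : ℕ} {q1 : Fin (w-2) → ℕ} {q2 : Fin (N-w) → ℕ}

lemma pB_V0 (h0 : 0 < N) : V (pB N w q1 q2) 0 = w := by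
  rw [V_lt _ h0]; rfl

lemma pB_VR {m : ℕ} (h1 : 1 ≤ m) (hm : m ≤ N - w) (hw : 0 < w) :
    V (pB N w q1 q2) m = V q2 (m-1) + w := by
  rw [V_lt _ (by omega)]
  show (if m = 0 then w else if m ≤ N - w then V q2 (m-1) + w
    else if m = N - w + 1 then 1 else V q1 (m - (N-w+2)) + 1) = _
  rw [if_neg (by omega), if_pos hm]

lemma pB_V1 (hw : 2 ≤ w) (hwN : w ≤ N) : V (pB N w q1 q2) (N-w+1) = 1 := by
  rw [V_lt _ (by omega)]
  show (if N-w+1 = 0 then w else if N-w+1 ≤ N - w then V q2 (N-w+1-1) + w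
    else if N-w+1 = N - w + 1 then 1 else V q1 (N-w+1 - (N-w+2)) + 1) = _
  rw [if_neg (by omega), if_neg (by omega), if_pos rfl]

lemma pB_VM {m : ℕ} (h1 : N-w+2 ≤ m) (hm : m < N) :
    V (pB N w q1 q2) m = V q1 (m - (N-w+2)) + 1 := by
  rw [V_lt _ hm]
  show (if m = 0 then w else if m ≤ N - w then V q2 (m-1) + w
    else if m = N - w + 1 then 1 else V q1 (m - (N-w+2)) + 1) = _
  rw [if_neg (by omega), if_neg (by omega), if_neg (by omega)]

variable (hw : 2 ≤ w) (hwN : w ≤ N) (hq1 : IsPerm q1) (hq2 : IsPerm q2)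
include hw hwN hq1 hq2

lemma pB_classify : ∀ m < N,
    (m = 0 ∧ V (pB N w q1 q2) m = w) ∨
    (1 ≤ m ∧ m ≤ N-w ∧ V (pB N w q1 q2) m = V q2 (m-1) + w ∧
      w+1 ≤ V (pB N w q1 q2) m ∧ V (pB N w q1 q2) m ≤ N) ∨
    (m = N-w+1 ∧ V (pB N w q1 q2) m = 1) ∨
    (N-w+2 ≤ m ∧ V (pB N w q1 q2) m = V q1 (m-(N-w+2)) + 1 ∧
      2 ≤ V (pB N w q1 q2) m ∧ V (pB N w q1 q2) m ≤ w-1) := by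
  intro m hm
  rcases Nat.eq_zero_or_pos m with h0 | h0
  · left; exact ⟨h0, by rw [h0, pB_V0 (by omega)]⟩
  rcases le_or_gt m (N-w) with hR | hR
  · right; left
    have he := pB_VR (q1 := q1) (q2 := q2) h0 hR (by omega)
    have hb := perm_V_bounds hq2 (show m-1 < N-w by omega)
    exact ⟨h0, hR, he, by omega, by omega⟩
  rcases Nat.eq_or_lt_of_le (show N-w+1 ≤ m by omega) with h1 | h1
  · right; right; left
    exact ⟨h1.symm, by rw [← h1, pB_V1 hw hwN]⟩
  · right; right; right
    have he := pB_VM (q1 := q1) (q2 := q2) (by omega) hm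
    have hb := perm_V_bounds hq1 (show m-(N-w+2) < w-2 by omega)
    exact ⟨by omega, he, by omega, by omega⟩

lemma pB_perm : IsPerm (pB N w q1 q2) := by
  have hcl := pB_classify hw hwN hq1 hq2
  refine isPerm_of_V ?_ ?_ ?_
  · intro a ha b hb hab
    rcases hcl a ha with ⟨e1,e2⟩|⟨e1,e2,e3,e4,e5⟩|⟨e1,e2⟩|⟨e1,e2,e3,e4⟩ <;>
      rcases hcl b hb with ⟨f1,f2⟩|⟨f1,f2,f3,f4,f5⟩|⟨f1,f2⟩|⟨f1,f2,f3,f4⟩ <;>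
      first
      | omega
      | (have := perm_V_inj hq2 (show a-1 < N-w by omega) (show b-1 < N-w by omega) (by omega)
         omega)
      | (have := perm_V_inj hq1 (show a-(N-w+2) < w-2 by omega)
          (show b-(N-w+2) < w-2 by omega) (by omega)
         omega)
  · intro m hm
    rcases hcl m hm with ⟨e1,e2⟩|⟨e1,e2,e3,e4,e5⟩|⟨e1,e2⟩|⟨e1,e2,e3,e4⟩ <;> omega
  · intro m h1 h2
    rcases Nat.eq_or_lt_of_le h1 with hm1 | hm1
    · exact ⟨N-w+1, by omega, by rw [pB_V1 hw hwN]; omega⟩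
    rcases Nat.lt_trichotomy m w with hmw | hmw | hmw
    · obtain ⟨i, hi, hVi⟩ := perm_V_surj hq1 (show 1 ≤ m-1 by omega) (show m-1 ≤ w-2 by omega)
      refine ⟨i+(N-w+2), by omega, ?_⟩
      rw [pB_VM (q1 := q1) (q2 := q2) (by omega) (by omega), Nat.add_sub_cancel, hVi]
      omega
    · exact ⟨0, by omega, by rw [pB_V0 (by omega)]; omega⟩
    · obtain ⟨i, hi, hVi⟩ := perm_V_surj hq2 (show 1 ≤ m-w by omega) (show m-w ≤ N-w by omega)
      refine ⟨i+1, by omega, ?_⟩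
      rw [pB_VR (q1 := q1) (q2 := q2) (by omega) (by omega) (by omega), Nat.add_sub_cancel, hVi]
      omega

lemma pB_omega_iff :
    ContainsOmega (pB N w q1 q2) ↔ ContainsOmega q1 ∨ ContainsOmega q2 := by
  have hcl := pB_classify hw hwN hq1 hq2
  rw [containsOmega_iff]
  constructor
  · rintro ⟨i, j, hij, hj, hdesc, hval⟩
    rcases hcl (i+1) (by omega) with ⟨e1,e2⟩|⟨e1,e2,e3,e4,e5⟩|⟨e1,e2⟩|⟨e1,e2,e3,e4⟩
    · omega
    · -- i+1 in R : bottom ≥ w+1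
      right
      rw [containsOmega_iff]
      have hiR : 1 ≤ i ∧ i ≤ N-w ∧ V (pB N w q1 q2) i = V q2 (i-1) + w := by
        rcases hcl i (by omega) with ⟨f1,f2⟩|⟨f1,f2,f3,f4,f5⟩|⟨f1,f2⟩|⟨f1,f2,f3,f4⟩ <;>
          first | omega | exact ⟨f1, f2, f3⟩
      have hjR : 1 ≤ j ∧ j ≤ N-w ∧ V (pB N w q1 q2) j = V q2 (j-1) + w := by
        rcases hcl j (by omega) with ⟨f1,f2⟩|⟨f1,f2,f3,f4,f5⟩|⟨f1,f2⟩|⟨f1,f2,f3,f4⟩ <;>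
          first | omega | exact ⟨f1, f2, f3⟩
      refine ⟨i-1, j-1, by omega, by omega, ?_, ?_⟩
      · rw [show i-1+1 = (i+1)-1 by omega]
        omega
      · rw [show i-1+1 = (i+1)-1 by omega]
        omega
    · -- bottom = 1 : V p j = 0 impossible
      rcases hcl j (by omega) with ⟨f1,f2⟩|⟨f1,f2,f3,f4,f5⟩|⟨f1,f2⟩|⟨f1,f2,f3,f4⟩ <;> omega
    · -- i+1 in M
      left
      rw [containsOmega_iff]
      have hiM : N-w+2 ≤ i ∧ V (pB N w q1 q2) i = V q1 (i-(N-w+2)) + 1 := by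
        rcases hcl i (by omega) with ⟨f1,f2⟩|⟨f1,f2,f3,f4,f5⟩|⟨f1,f2⟩|⟨f1,f2,f3,f4⟩ <;>
          first | omega | exact ⟨f1, f2⟩
      have hjM : N-w+2 ≤ j ∧ V (pB N w q1 q2) j = V q1 (j-(N-w+2)) + 1 := by
        rcases hcl j (by omega) with ⟨f1,f2⟩|⟨f1,f2,f3,f4,f5⟩|⟨f1,f2⟩|⟨f1,f2,f3,f4⟩ <;>
          first | omega | exact ⟨f1, f2⟩
      refine ⟨i-(N-w+2), j-(N-w+2), by omega, by omega, ?_, ?_⟩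
      · rw [show i-(N-w+2)+1 = (i+1)-(N-w+2) by omega]
        omega
      · rw [show i-(N-w+2)+1 = (i+1)-(N-w+2) by omega]
        omega
  · rintro (h | h)
    · rw [containsOmega_iff] at h
      obtain ⟨i, j, hij, hjlt, hdesc, hval⟩ := h
      have e1 := pB_VM (q1 := q1) (q2 := q2) (show N-w+2 ≤ i+(N-w+2) by omega)
        (show i+(N-w+2) < N by omega)
      have e2 := pB_VM (q1 := q1) (q2 := q2) (show N-w+2 ≤ (i+1)+(N-w+2) by omega)
        (show (i+1)+(N-w+2) < N by omega)
      have e3 := pB_VM (q1 := q1) (q2 := q2) (show N-w+2 ≤ j+(N-w+2) by omega)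
        (show j+(N-w+2) < N by omega)
      simp only [Nat.add_sub_cancel] at e1 e2 e3
      refine ⟨i+(N-w+2), j+(N-w+2), by omega, by omega, ?_, ?_⟩ <;>
      · rw [show i+(N-w+2)+1 = (i+1)+(N-w+2) by omega]
        omega
    · rw [containsOmega_iff] at h
      obtain ⟨i, j, hij, hjlt, hdesc, hval⟩ := h
      have e1 := pB_VR (q1 := q1) (q2 := q2) (show 1 ≤ i+1 by omega)
        (show i+1 ≤ N-w by omega) (by omega)
      have e2 := pB_VR (q1 := q1) (q2 := q2) (show 1 ≤ (i+1)+1 by omega)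
        (show (i+1)+1 ≤ N-w by omega) (by omega)
      have e3 := pB_VR (q1 := q1) (q2 := q2) (show 1 ≤ j+1 by omega)
        (show j+1 ≤ N-w by omega) (by omega)
      simp only [Nat.add_sub_cancel] at e1 e2 e3
      refine ⟨i+1, j+1, by omega, by omega, ?_, ?_⟩ <;> omega

lemma pB_contains_iff :
    Contains (pB N w q1 q2) ![2,1,3] ↔ Contains q1 ![2,1,3] ∨ Contains q2 ![2,1,3] := by
  have hcl := pB_classify hw hwN hq1 hq2
  rw [contains213_iff]
  constructor
  · rintro ⟨a, b, c, hab, hbc, hc, h1, h2⟩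
    rcases hcl a (by omega) with ⟨e1,e2⟩|⟨e1,e2,e3,e4,e5⟩|⟨e1,e2⟩|⟨e1,e2,e3,e4⟩
    · -- a = 0 : V p c > w so c in R, then b in R with value > w = V p a, contra V p b < V p a
      rcases hcl b (by omega) with ⟨f1,f2⟩|⟨f1,f2,f3,f4,f5⟩|⟨f1,f2⟩|⟨f1,f2,f3,f4⟩ <;>
        rcases hcl c hc with ⟨g1,g2⟩|⟨g1,g2,g3,g4,g5⟩|⟨g1,g2⟩|⟨g1,g2,g3,g4⟩ <;> omega
    · -- a in R
      right
      rw [contains213_iff]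
      have hcR : 1 ≤ c ∧ c ≤ N-w ∧ V (pB N w q1 q2) c = V q2 (c-1) + w := by
        rcases hcl c hc with ⟨g1,g2⟩|⟨g1,g2,g3,g4,g5⟩|⟨g1,g2⟩|⟨g1,g2,g3,g4⟩ <;>
          first | omega | exact ⟨g1, g2, g3⟩
      have hbR : 1 ≤ b ∧ b ≤ N-w ∧ V (pB N w q1 q2) b = V q2 (b-1) + w := by
        rcases hcl b (by omega) with ⟨g1,g2⟩|⟨g1,g2,g3,g4,g5⟩|⟨g1,g2⟩|⟨g1,g2,g3,g4⟩ <;>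
          first | omega | exact ⟨g1, g2, g3⟩
      exact ⟨a-1, b-1, c-1, by omega, by omega, by omega, by omega, by omega⟩
    · -- a = N-w+1 : V p a = 1, V p b < 1 impossible
      rcases hcl b (by omega) with ⟨g1,g2⟩|⟨g1,g2,g3,g4,g5⟩|⟨g1,g2⟩|⟨g1,g2,g3,g4⟩ <;> omega
    · -- a in M
      left
      rw [contains213_iff]
      have hbM : N-w+2 ≤ b ∧ V (pB N w q1 q2) b = V q1 (b-(N-w+2)) + 1 := by
        rcases hcl b (by omega) with ⟨g1,g2⟩|⟨g1,g2,g3,g4,g5⟩|⟨g1,g2⟩|⟨g1,g2,g3,g4⟩ <;>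
          first | omega | exact ⟨g1, g2⟩
      have hcM : N-w+2 ≤ c ∧ V (pB N w q1 q2) c = V q1 (c-(N-w+2)) + 1 := by
        rcases hcl c hc with ⟨g1,g2⟩|⟨g1,g2,g3,g4,g5⟩|⟨g1,g2⟩|⟨g1,g2,g3,g4⟩ <;>
          first | omega | exact ⟨g1, g2⟩
      exact ⟨a-(N-w+2), b-(N-w+2), c-(N-w+2), by omega, by omega, by omega, by omega, by omega⟩
  · rintro (h | h)
    · rw [contains213_iff] at h
      obtain ⟨a, b, c, hab, hbc, hc, h1, h2⟩ := h
      have e1 := pB_VM (q1 := q1) (q2 := q2) (show N-w+2 ≤ a+(N-w+2) by omega)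
        (show a+(N-w+2) < N by omega)
      have e2 := pB_VM (q1 := q1) (q2 := q2) (show N-w+2 ≤ b+(N-w+2) by omega)
        (show b+(N-w+2) < N by omega)
      have e3 := pB_VM (q1 := q1) (q2 := q2) (show N-w+2 ≤ c+(N-w+2) by omega)
        (show c+(N-w+2) < N by omega)
      simp only [Nat.add_sub_cancel] at e1 e2 e3
      exact ⟨a+(N-w+2), b+(N-w+2), c+(N-w+2), by omega, by omega, by omega, by omega, by omega⟩
    · rw [contains213_iff] at h
      obtain ⟨a, b, c, hab, hbc, hc, h1, h2⟩ := h
      have e1 := pB_VR (q1 := q1) (q2 := q2) (show 1 ≤ a+1 by omega)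
        (show a+1 ≤ N-w by omega) (by omega)
      have e2 := pB_VR (q1 := q1) (q2 := q2) (show 1 ≤ b+1 by omega)
        (show b+1 ≤ N-w by omega) (by omega)
      have e3 := pB_VR (q1 := q1) (q2 := q2) (show 1 ≤ c+1 by omega)
        (show c+1 ≤ N-w by omega) (by omega)
      simp only [Nat.add_sub_cancel] at e1 e2 e3
      exact ⟨a+1, b+1, c+1, by omega, by omega, by omega, by omega, by omega⟩

end GB

-- ##### structure of 213&omega avoiders with first value w

lemma struct213 {N w : ℕ} {p : Fin N → ℕ} (hp : IsPerm p) (hOm : ¬ ContainsOmega p)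
    (hA : Avoids p ![2,1,3]) (hw : 2 ≤ w) (hwN : w ≤ N) (h0 : V p 0 = w) :
    (∀ m, 1 ≤ m → m < N → (w < V p m ↔ m ≤ N - w)) ∧ V p (N-w+1) = 1 := by
  classical
  have hNw : ∀ m, 1 ≤ m → m < N → V p m ≠ w := by
    intro m h1 h2 hc
    have := perm_V_inj hp h2 (by omega : 0 < N) (by rw [hc, h0])
    omega
  have hdc : ∀ s t, 1 ≤ s → s < t → t < N → w < V p t → w < V p s := by
    intro s t h1 hst ht hVt
    by_contra hc
    push_neg at hc
    have hs : V p s < w := by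
      have := hNw s h1 (by omega)
      omega
    exact hA ((contains213_iff p).2 ⟨0, s, t, by omega, hst, ht, by omega, by omega⟩)
  have hcard : ((Finset.range N).filter (fun i => 1 ≤ i ∧ w < V p i)).card = N - w := by
    rw [show N - w = (Finset.Icc (w+1) N).card by rw [Nat.card_Icc]; omega]
    refine Finset.card_bij (fun a _ => V p a) ?_ ?_ ?_
    · intro a ha
      simp only [Finset.mem_filter, Finset.mem_range] at ha
      simp only [Finset.mem_Icc]
      have := (perm_V_bounds hp ha.1).2
      omega
    · intro a ha b hb hab
      simp only [Finset.mem_filter, Finset.mem_range] at ha hb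
      exact perm_V_inj hp ha.1 hb.1 hab
    · intro b hb
      simp only [Finset.mem_Icc] at hb
      obtain ⟨i, hi, hVi⟩ := perm_V_surj hp (by omega) hb.2
      have hi1 : 1 ≤ i := by
        rcases Nat.eq_zero_or_pos i with h | h
        · rw [h, h0] at hVi; omega
        · omega
      exact ⟨i, by simp only [Finset.mem_filter, Finset.mem_range]; exact ⟨hi, hi1, by omega⟩, hVi⟩
  have hSL1 := initial_segment (fun i => w < V p i) hcard hdc
  refine ⟨hSL1, ?_⟩
  have hsN : N-w+1 < N := by omega
  have hb1 := perm_V_bounds hp hsN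
  by_contra hne
  have hu2 : 2 ≤ V p (N-w+1) := by omega
  have huw : V p (N-w+1) < w := by
    have hnb : ¬ (w < V p (N-w+1)) := by
      intro hc
      have := (hSL1 (N-w+1) (by omega) hsN).1 hc
      omega
    have := hNw (N-w+1) (by omega) hsN
    omega
  obtain ⟨j, hj, hVj⟩ := perm_V_surj hp (show 1 ≤ V p (N-w+1) - 1 by omega) (by omega)
  have hj0 : j ≠ 0 := by
    intro hc
    rw [hc, h0] at hVj
    omega
  have hjR : ¬ (j ≤ N-w) := by
    intro hc
    have hj1 : 1 ≤ j := by omega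
    have := (hSL1 j hj1 hj).2 hc
    omega
  have hjs : j ≠ N-w+1 := by
    intro hc
    rw [hc] at hVj
    omega
  have hVnw : V p (N-w+1) < V p (N-w) := by
    rcases Nat.eq_zero_or_pos (N-w) with h | h
    · rw [h, h0]
      rw [h] at huw
      omega
    · have : w < V p (N-w) := (hSL1 (N-w) h (by omega)).2 (by omega)
      omega
  exact hOm ((containsOmega_iff p).2 ⟨N-w, j, by omega, hj, hVnw, by omega⟩)

-- ##### fiber cardinality for 213, first value w

lemma fib_big_card_213 (N w : ℕ) (hw : 2 ≤ w) (hwN : w ≤ N) :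
    Nat.card {p : Fin N → ℕ //
        (IsPerm p ∧ ¬ ContainsOmega p ∧ Avoids p ![2,1,3]) ∧ V p 0 = w}
      = Nat.card {q : Fin (w-2) → ℕ // IsPerm q ∧ ¬ ContainsOmega q ∧ Avoids q ![2,1,3]}
        * Nat.card {q : Fin (N-w) → ℕ // IsPerm q ∧ ¬ ContainsOmega q ∧ Avoids q ![2,1,3]} := by
  rw [← Nat.card_prod]
  refine (Nat.card_congr (Equiv.ofBijective
    (fun qq : {q : Fin (w-2) → ℕ // IsPerm q ∧ ¬ ContainsOmega q ∧ Avoids q ![2,1,3]}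
        × {q : Fin (N-w) → ℕ // IsPerm q ∧ ¬ ContainsOmega q ∧ Avoids q ![2,1,3]} =>
      (⟨pB N w qq.1.1 qq.2.1, ⟨pB_perm hw hwN qq.1.2.1 qq.2.2.1,
        fun h => by
          rcases (pB_omega_iff hw hwN qq.1.2.1 qq.2.2.1).1 h with h | h
          · exact qq.1.2.2.1 h
          · exact qq.2.2.2.1 h,
        fun h => by
          rcases (pB_contains_iff hw hwN qq.1.2.1 qq.2.2.1).1 h with h | h
          · exact qq.1.2.2.2 h
          · exact qq.2.2.2.2 h⟩, pB_V0 (by omega)⟩ :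
      {p : Fin N → ℕ // (IsPerm p ∧ ¬ ContainsOmega p ∧ Avoids p ![2,1,3]) ∧ V p 0 = w}))
    ⟨?_, ?_⟩)).symm
  · intro qq qq' h
    have h2 : pB N w qq.1.1 qq.2.1 = pB N w qq'.1.1 qq'.2.1 := congrArg Subtype.val h
    have e1 : qq.1.1 = qq'.1.1 := by
      refine V_ext fun m hm => ?_
      have a1 := pB_VM (q1 := qq.1.1) (q2 := qq.2.1) (show N-w+2 ≤ m+(N-w+2) by omega)
        (show m+(N-w+2) < N by omega)
      have a2 := pB_VM (q1 := qq'.1.1) (q2 := qq'.2.1) (show N-w+2 ≤ m+(N-w+2) by omega)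
        (show m+(N-w+2) < N by omega)
      rw [h2] at a1
      simp only [Nat.add_sub_cancel] at a1 a2
      omega
    have e2 : qq.2.1 = qq'.2.1 := by
      refine V_ext fun m hm => ?_
      have a1 := pB_VR (q1 := qq.1.1) (q2 := qq.2.1) (show 1 ≤ m+1 by omega)
        (show m+1 ≤ N-w by omega) (by omega)
      have a2 := pB_VR (q1 := qq'.1.1) (q2 := qq'.2.1) (show 1 ≤ m+1 by omega)
        (show m+1 ≤ N-w by omega) (by omega)
      rw [h2] at a1
      simp only [Nat.add_sub_cancel] at a1 a2
      omega
    exact Prod.ext (Subtype.ext e1) (Subtype.ext e2)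
  · rintro ⟨p, ⟨hp, hOm, hA⟩, h0⟩
    obtain ⟨hSL1, hSL2⟩ := struct213 hp hOm hA hw hwN h0
    have hNw : ∀ m, 1 ≤ m → m < N → V p m ≠ w := by
      intro m h1 h2 hc
      have := perm_V_inj hp h2 (by omega : 0 < N) (by rw [hc, h0])
      omega
    have hRv : ∀ m, 1 ≤ m → m ≤ N-w → w+1 ≤ V p m ∧ V p m ≤ N := by
      intro m h1 hm
      have hb := perm_V_bounds hp (show m < N by omega)
      have := (hSL1 m h1 (by omega)).2 hm
      omega
    have hMv : ∀ m, N-w+2 ≤ m → m < N → 2 ≤ V p m ∧ V p m ≤ w-1 := by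
      intro m h2 hmN
      have hb := perm_V_bounds hp hmN
      have hgt : ¬ (w < V p m) := by
        intro hc
        have := (hSL1 m (by omega) hmN).1 hc
        omega
      have hne1 : V p m ≠ 1 := by
        intro hc
        have := perm_V_inj hp hmN (show N-w+1 < N by omega) (by rw [hc, hSL2])
        omega
      have := hNw m (by omega) hmN
      omega
    set q1 : Fin (w-2) → ℕ := fun j => V p ((j:ℕ)+(N-w+2)) - 1 with hq1def
    set q2 : Fin (N-w) → ℕ := fun j => V p ((j:ℕ)+1) - w with hq2def
    have hq1V : ∀ m, m < w-2 → V q1 m = V p (m+(N-w+2)) - 1 := fun m hm => by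
      rw [V_lt _ hm]
    have hq2V : ∀ m, m < N-w → V q2 m = V p (m+1) - w := fun m hm => by
      rw [V_lt _ hm]
    have hq1perm : IsPerm q1 := by
      refine isPerm_of_V ?_ ?_ ?_
      · intro a ha b hb hab
        rw [hq1V a ha, hq1V b hb] at hab
        have m1 := hMv (a+(N-w+2)) (by omega) (by omega)
        have m2 := hMv (b+(N-w+2)) (by omega) (by omega)
        have := perm_V_inj hp (show a+(N-w+2) < N by omega)
          (show b+(N-w+2) < N by omega) (by omega)
        omega
      · intro m hm
        rw [hq1V m hm]
        have := hMv (m+(N-w+2)) (by omega) (by omega)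
        omega
      · intro m h1 h2
        obtain ⟨i, hi, hVi⟩ := perm_V_surj hp (show 1 ≤ m+1 by omega) (by omega)
        have hi0 : i ≠ 0 := by
          intro hc; rw [hc, h0] at hVi; omega
        have his : i ≠ N-w+1 := by
          intro hc; rw [hc, hSL2] at hVi; omega
        have hiR : ¬ (i ≤ N-w) := by
          intro hc
          have := (hSL1 i (by omega) hi).2 hc
          omega
        refine ⟨i-(N-w+2), by omega, ?_⟩
        rw [hq1V (i-(N-w+2)) (by omega), show i-(N-w+2)+(N-w+2) = i by omega, hVi]
        omega
    have hq2perm : IsPerm q2 := by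
      refine isPerm_of_V ?_ ?_ ?_
      · intro a ha b hb hab
        rw [hq2V a ha, hq2V b hb] at hab
        have m1 := hRv (a+1) (by omega) (by omega)
        have m2 := hRv (b+1) (by omega) (by omega)
        have := perm_V_inj hp (show a+1 < N by omega) (show b+1 < N by omega) (by omega)
        omega
      · intro m hm
        rw [hq2V m hm]
        have := hRv (m+1) (by omega) (by omega)
        omega
      · intro m h1 h2
        obtain ⟨i, hi, hVi⟩ := perm_V_surj hp (show 1 ≤ m+w by omega) (by omega)
        have hi0 : i ≠ 0 := by
          intro hc; rw [hc, h0] at hVi; omega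
        have hiR : i ≤ N-w := by
          by_contra hc
          push_neg at hc
          rcases Nat.eq_or_lt_of_le (show N-w+1 ≤ i by omega) with h | h
          · rw [← h, hSL2] at hVi; omega
          · have := hMv i (by omega) hi
            omega
        refine ⟨i-1, by omega, ?_⟩
        rw [hq2V (i-1) (by omega), show i-1+1 = i by omega, hVi]
        omega
    have hgl : pB N w q1 q2 = p := by
      refine V_ext fun m hm => ?_
      rcases Nat.eq_zero_or_pos m with hm0 | hm0
      · rw [hm0, pB_V0 (by omega), h0]
      rcases le_or_gt m (N-w) with hmR | hmR
      · rw [pB_VR (q1 := q1) (q2 := q2) hm0 hmR (by omega), hq2V (m-1) (by omega),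
          show m-1+1 = m by omega]
        have := hRv m hm0 hmR
        omega
      rcases Nat.eq_or_lt_of_le (show N-w+1 ≤ m by omega) with hm1 | hm1
      · rw [← hm1, pB_V1 hw hwN, hSL2]
      · rw [pB_VM (q1 := q1) (q2 := q2) (by omega) hm, hq1V (m-(N-w+2)) (by omega),
          show m-(N-w+2)+(N-w+2) = m by omega]
        have := hMv m (by omega) hm
        omega
    have hOmq := fun h => hOm (hgl ▸ (pB_omega_iff hw hwN hq1perm hq2perm).2 h)
    have hAq := fun h => hA (hgl ▸ (pB_contains_iff hw hwN hq1perm hq2perm).2 h)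
    exact ⟨⟨⟨q1, hq1perm, fun h => hOmq (Or.inl h), fun h => hAq (Or.inl h)⟩,
      ⟨q2, hq2perm, fun h => hOmq (Or.inr h), fun h => hAq (Or.inr h)⟩⟩,
      Subtype.ext hgl⟩

-- ##### assembly

noncomputable def cnt (y : Fin 3 → ℕ) (n : ℕ) : ℕ :=
  Nat.card {p : Fin n → ℕ // IsPerm p ∧ ¬ ContainsOmega p ∧ Avoids p y}

lemma cnt_zero (y : Fin 3 → ℕ) : cnt y 0 = 1 := by
  have hdef : IsPerm (fun i : Fin 0 => (i.elim0 : ℕ)) ∧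
      ¬ ContainsOmega (fun i : Fin 0 => (i.elim0 : ℕ)) ∧
      Avoids (fun i : Fin 0 => (i.elim0 : ℕ)) y := by
    refine ⟨⟨fun a => a.elim0, ?_⟩, ?_, ?_⟩
    · rw [Set.Icc_eq_empty (by norm_num), Set.range_eq_empty]
    · rintro ⟨i, -⟩
      exact i.elim0
    · rintro ⟨f, -⟩
      exact (f 0).elim0
  haveI : Unique {p : Fin 0 → ℕ // IsPerm p ∧ ¬ ContainsOmega p ∧ Avoids p y} :=
    { default := ⟨_, hdef⟩
      uniq := fun a => Subtype.ext (funext fun i => i.elim0) }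
  exact Nat.card_unique

lemma nat_card_fiber_sum {α : Type*} [Finite α] (g : α → ℕ) (K : ℕ) (hg : ∀ a, g a < K) :
    Nat.card α = ∑ v ∈ Finset.range K, Nat.card {a : α // g a = v} := by
  classical
  letI := Fintype.ofFinite α
  rw [Nat.card_eq_fintype_card, ← Finset.card_univ,
    Finset.card_eq_sum_card_fiberwise (f := g) (t := Finset.range K)
      (fun a _ => Finset.mem_range.2 (hg a))]
  refine Finset.sum_congr rfl fun v _ => ?_
  rw [Nat.card_eq_fintype_card, Fintype.card_subtype]

lemma cnt_succ (y : Fin 3 → ℕ) (hy : y = ![2, 1, 3] ∨ y = ![2, 3, 1]) (n : ℕ) :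
    cnt y (n+1) = cnt y n + ∑ j ∈ Finset.range n, cnt y j * cnt y (n-1-j) := by
  classical
  haveI : Finite {p : Fin (n+1) → ℕ // IsPerm p ∧ ¬ ContainsOmega p ∧ Avoids p y} :=
    finite_of_perm _
  have hg : ∀ a : {p : Fin (n+1) → ℕ // IsPerm p ∧ ¬ ContainsOmega p ∧ Avoids p y},
      V a.1 0 - 1 < n+1 := fun a => by
    have := (perm_V_bounds a.2.1 (show 0 < n+1 by omega)).2
    omega
  have hpart := nat_card_fiber_sum (fun a : {p : Fin (n+1) → ℕ //
      IsPerm p ∧ ¬ ContainsOmega p ∧ Avoids p y} => V a.1 0 - 1) (n+1) hg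
  have hfib : ∀ v, Nat.card {a : {p : Fin (n+1) → ℕ //
        IsPerm p ∧ ¬ ContainsOmega p ∧ Avoids p y} // V a.1 0 - 1 = v}
      = Nat.card {p : Fin (n+1) → ℕ //
          (IsPerm p ∧ ¬ ContainsOmega p ∧ Avoids p y) ∧ V p 0 = v+1} := by
    intro v
    refine Nat.card_congr ⟨fun a => ⟨a.1.1, a.1.2, ?_⟩, fun b => ⟨⟨b.1, b.2.1⟩, ?_⟩, ?_, ?_⟩
    · have := (perm_V_bounds a.1.2.1 (show 0 < n+1 by omega)).1
      have := a.2
      omega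
    · show V b.1 0 - 1 = v
      have := b.2.2
      omega
    · intro a
      apply Subtype.ext
      apply Subtype.ext
      rfl
    · intro b
      apply Subtype.ext
      rfl
  rw [cnt, hpart, Finset.sum_congr rfl (fun v _ => hfib v), Finset.sum_range_succ']
  have h0 : Nat.card {p : Fin (n+1) → ℕ //
      (IsPerm p ∧ ¬ ContainsOmega p ∧ Avoids p y) ∧ V p 0 = 0+1} = cnt y n :=
    fib_one_card y hy n
  rw [h0, Nat.add_comm]
  congr 1
  refine Finset.sum_congr rfl fun j hj => ?_
  simp only [Finset.mem_range] at hj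
  have hbig : Nat.card {p : Fin (n+1) → ℕ //
      (IsPerm p ∧ ¬ ContainsOmega p ∧ Avoids p y) ∧ V p 0 = (j+1)+1}
      = cnt y j * cnt y (n-1-j) := by
    rcases hy with hy | hy <;> subst hy
    · have := fib_big_card_213 (n+1) (j+2) (by omega) (by omega)
      rw [show (j+1)+1 = j+2 from rfl, this, show j+2-2 = j from rfl,
        show n+1-(j+2) = n-1-j by omega]
      rfl
    · have := fib_big_card_231 (n+1) (j+2) (by omega) (by omega)
      rw [show (j+1)+1 = j+2 from rfl, this, show j+2-2 = j from rfl,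
        show n+1-(j+2) = n-1-j by omega]
      rfl
  exact hbig

-- ##### main theorem

/-- For `y ∈ {213, 231}`, the number of permutations of `{1,…,n}`
avoiding both `ω` and `y` is the `n`-th Motzkin number
`m_n = Σ_k C(n,2k) · c_k`. -/
theorem count_omega_y (n : ℕ) (y : Fin 3 → ℕ)
    (hy : y = ![2, 1, 3] ∨ y = ![2, 3, 1]) :
    Nat.card {p : Fin n → ℕ // IsPerm p ∧ ¬ ContainsOmega p ∧ Avoids p y} =
      ∑ k ∈ Finset.range (n + 1), Nat.choose n (2 * k) * catalan k := by
  have key : ∀ m, cnt y m = Mz m := by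
    intro m
    induction m using Nat.strong_induction_on with
    | _ m ih =>
      cases m with
      | zero =>
        rw [cnt_zero]
        simp [Mz]
      | succ k =>
        rw [cnt_succ y hy k, Mz_succ k, ih k (by omega)]
        congr 1
        refine Finset.sum_congr rfl fun j hj => ?_
        simp only [Finset.mem_range] at hj
        rw [ih j (by omega), ih (k-1-j) (by omega)]
  exact key n
end

section
/- A modified ascent sequence avoids the pattern 213 if and only if it avoids the pattern 1213, and a modified ascent sequence avoids the pattern 312 if and only if it avoids the pattern 1312; that is, Modasc(213) = Modasc(1213) and Modasc(312) = Modasc(1312). -/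
private lemma core {n : ℕ} {x : Fin n → ℕ} (hmod : AscTops x = Nub x)
    {i j0 k : Fin n} {v : ℕ} (hij : i < j0) (hjk : j0 < k)
    (hj0 : x j0 < v) (hv : v ≤ x i) :
    ∃ p j : Fin n, p < i ∧ i < j ∧ j < k ∧ x p = x j ∧ x j < v := by
  classical
  set S : Finset (Fin n) := Finset.univ.filter (fun j => i < j ∧ j < k ∧ x j < v) with hS
  have hne : S.Nonempty := ⟨j0, by simp [hS, hij, hjk, hj0]⟩
  set j := S.min' hne with hjdef
  have hjS : j ∈ S := S.min'_mem hne
  simp only [hS, Finset.mem_filter, Finset.mem_univ, true_and] at hjS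
  obtain ⟨hij', hjk', hjv⟩ := hjS
  by_cases hnub : j ∈ Nub x
  · -- j is an ascent top, so predecessor has smaller value, contradiction with minimality
    have hasc : j ∈ AscTops x := hmod ▸ hnub
    have hjpos : 0 < (j : ℕ) := by
      have := Fin.lt_def.mp hij'
      omega
    exfalso
    have hj1 : (j : ℕ) - 1 < n := by omega
    set j' : Fin n := ⟨(j : ℕ) - 1, hj1⟩ with hj'
    have hsucc : (j' : ℕ) + 1 = (j : ℕ) := by simp [hj']; omega
    have hxj' : x j' < x j := hasc j' hsucc
    have hij'' : i < j' := by
      rcases lt_trichotomy i j' with h | h | h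
      · exact h
      · exfalso; rw [← h] at hxj'; omega
      · exfalso
        have : (i : ℕ) < (j : ℕ) := hij'
        have : (j' : ℕ) < (i : ℕ) := h
        simp [hj'] at this
        omega
    have hj'S : j' ∈ S := by
      simp only [hS, Finset.mem_filter, Finset.mem_univ, true_and]
      refine ⟨hij'', ?_, by omega⟩
      have : (j' : ℕ) < (j : ℕ) := by simp [hj']; omega
      exact lt_trans (show j' < j from this) hjk'
    have := S.min'_le j' hj'S
    have : (j : ℕ) ≤ (j' : ℕ) := this
    simp [hj'] at this
    omega
  · simp only [Nub, Set.mem_setOf_eq] at hnub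
    push_neg at hnub
    obtain ⟨p, hpj, hpx⟩ := hnub
    rcases lt_trichotomy p i with h | h | h
    · exact ⟨p, j, h, hij', hjk', hpx, hjv⟩
    · exfalso; rw [← h] at hv; omega
    · exfalso
      have hpS : p ∈ S := by
        simp only [hS, Finset.mem_filter, Finset.mem_univ, true_and]
        exact ⟨h, lt_trans hpj hjk', by omega⟩
      have := S.min'_le p hpS
      exact absurd this (not_le.mpr hpj)

private lemma l213 {n : ℕ} {x : Fin n → ℕ} (hmod : AscTops x = Nub x)
    (h : Contains x ![2, 1, 3]) : Contains x ![1, 2, 1, 3] := by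
  obtain ⟨f, hf, hc⟩ := h
  have hij : f 0 < f 1 := hf (by decide)
  have hjk : f 1 < f 2 := hf (by decide)
  have h1 : x (f 1) < x (f 0) := (hc 1 0).mp (by decide)
  have h2 : x (f 0) < x (f 2) := (hc 0 2).mp (by decide)
  obtain ⟨p, j, hpi, hij', hjk', hpe, hjv⟩ := core hmod hij hjk h1 (le_refl _)
  refine ⟨fun s => if (s : ℕ) = 0 then p else if (s : ℕ) = 1 then f 0
    else if (s : ℕ) = 2 then j else f 2, ?_, ?_⟩
  · intro a b hab
    have hab' := Fin.lt_def.mp hab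
    have ha4 := a.isLt
    have hb4 := b.isLt
    have e1 := Fin.lt_def.mp hpi
    have e2 := Fin.lt_def.mp hij'
    have e3 := Fin.lt_def.mp hjk'
    simp only [Fin.lt_def]
    split_ifs <;> omega
  · intro s t
    have hev : ∀ u : Fin 4, (![1, 2, 1, 3] u) =
        if (u : ℕ) = 0 then 1 else if (u : ℕ) = 1 then 2
        else if (u : ℕ) = 2 then 1 else 3 := by decide
    rw [hev s, hev t]
    dsimp only
    split_ifs <;> omega

private lemma l312 {n : ℕ} {x : Fin n → ℕ} (hmod : AscTops x = Nub x)
    (h : Contains x ![3, 1, 2]) : Contains x ![1, 3, 1, 2] := by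
  obtain ⟨f, hf, hc⟩ := h
  have hij : f 0 < f 1 := hf (by decide)
  have hjk : f 1 < f 2 := hf (by decide)
  have h1 : x (f 1) < x (f 2) := (hc 1 2).mp (by decide)
  have h2 : x (f 2) < x (f 0) := (hc 2 0).mp (by decide)
  obtain ⟨p, j, hpi, hij', hjk', hpe, hjv⟩ := core hmod hij hjk h1 (le_of_lt h2)
  refine ⟨fun s => if (s : ℕ) = 0 then p else if (s : ℕ) = 1 then f 0
    else if (s : ℕ) = 2 then j else f 2, ?_, ?_⟩
  · intro a b hab
    have hab' := Fin.lt_def.mp hab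
    have ha4 := a.isLt
    have hb4 := b.isLt
    have e1 := Fin.lt_def.mp hpi
    have e2 := Fin.lt_def.mp hij'
    have e3 := Fin.lt_def.mp hjk'
    simp only [Fin.lt_def]
    split_ifs <;> omega
  · intro s t
    have hev : ∀ u : Fin 4, (![1, 3, 1, 2] u) =
        if (u : ℕ) = 0 then 1 else if (u : ℕ) = 1 then 3
        else if (u : ℕ) = 2 then 1 else 2 := by decide
    rw [hev s, hev t]
    dsimp only
    split_ifs <;> omega

private lemma sub1213 {n : ℕ} {x : Fin n → ℕ}
    (h : Contains x ![1, 2, 1, 3]) : Contains x ![2, 1, 3] := by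
  obtain ⟨f, hf, hc⟩ := h
  refine ⟨fun s => f s.succ, fun a b hab => hf (Fin.succ_lt_succ_iff.mpr hab), fun s t => ?_⟩
  have hval : ∀ u : Fin 3, (![2, 1, 3] u) = ![1, 2, 1, 3] u.succ := by decide
  rw [hval s, hval t]
  exact hc s.succ t.succ

private lemma sub1312 {n : ℕ} {x : Fin n → ℕ}
    (h : Contains x ![1, 3, 1, 2]) : Contains x ![3, 1, 2] := by
  obtain ⟨f, hf, hc⟩ := h
  refine ⟨fun s => f s.succ, fun a b hab => hf (Fin.succ_lt_succ_iff.mpr hab), fun s t => ?_⟩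
  have hval : ∀ u : Fin 3, (![3, 1, 2] u) = ![1, 3, 1, 2] u.succ := by decide
  rw [hval s, hval t]
  exact hc s.succ t.succ

/-- `Modasc(213) = Modasc(1213)` and `Modasc(312) = Modasc(1312)`. -/
theorem modasc_213_1213_312_1312 (n : ℕ) :
    ({x : Fin n → ℕ | IsModasc x ∧ Avoids x ![2, 1, 3]} =
      {x : Fin n → ℕ | IsModasc x ∧ Avoids x ![1, 2, 1, 3]}) ∧
    ({x : Fin n → ℕ | IsModasc x ∧ Avoids x ![3, 1, 2]} =
      {x : Fin n → ℕ | IsModasc x ∧ Avoids x ![1, 3, 1, 2]}) := by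
  constructor <;> ext x <;> simp only [Set.mem_setOf_eq] <;>
    constructor <;> rintro ⟨hm, ha⟩ <;> refine ⟨hm, fun hcont => ha ?_⟩
  · exact sub1213 hcont
  · exact l213 hm.2 hcont
  · exact sub1312 hcont
  · exact l312 hm.2 hcont
end

section
/- For every n ≥ 0: (i) a primitive modified ascent sequence of length n avoids the pattern 221 if and only if it avoids the pattern 2321, i.e. Prim_n(221) = Prim_n(2321); and (ii) the image under standardization of the set of primitive modified ascent sequences of length n avoiding 221 equals the set of permutations p of {1,…,n} with p_1 = 1 that avoid the vincular pattern 32-1, where p contains 32-1 if there exist indices i and k with i + 1 < k and p_i > p_{i+1} > p_k. -/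
/-- `p` contains the vincular pattern `32-1`: there are `i` and `k` with
`i + 1 < k` and `p i > p (i+1) > p k`. -/
def Contains32Dash1 {n : ℕ} (p : Fin n → ℕ) : Prop :=
  ∃ (i k : Fin n) (hi : (i : ℕ) + 1 < n),
    (i : ℕ) + 1 < (k : ℕ) ∧ p ⟨(i : ℕ) + 1, hi⟩ < p i ∧ p k < p ⟨(i : ℕ) + 1, hi⟩

section StdLemmas
variable {n : ℕ} (x : Fin n → ℕ)

def KS (i : Fin n) : Finset (Fin n) :=
  Finset.univ.filter fun j => x j < x i ∨ (j ≤ i ∧ x j = x i)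

lemma std_eq_card (i : Fin n) : Std x i = (KS x i).card := by
  unfold Std KS
  rw [Finset.filter_or, Finset.card_union_of_disjoint]
  simp only [Finset.disjoint_left, Finset.mem_filter]
  rintro a ⟨-, h1⟩ ⟨-, -, h2⟩
  omega

lemma KS_self (i : Fin n) : i ∈ KS x i := by
  simp [KS]

lemma KS_ssubset {i j : Fin n} (h : x j < x i ∨ (x j = x i ∧ j < i)) :
    KS x j ⊂ KS x i := by
  constructor
  · intro a ha
    simp only [KS, Finset.mem_filter, Finset.mem_univ, true_and] at ha ⊢
    rcases ha with ha | ⟨haj, ha⟩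
    · rcases h with h | ⟨h, -⟩
      · exact Or.inl (ha.trans h)
      · exact Or.inl (h ▸ ha)
    · rcases h with h | ⟨h, hji⟩
      · exact Or.inl (ha ▸ h)
      · exact Or.inr ⟨haj.trans hji.le, ha.trans h⟩
  · intro hsub
    have := hsub (KS_self x i)
    simp only [KS, Finset.mem_filter, Finset.mem_univ, true_and] at this
    rcases this with hlt | ⟨hle, heq⟩
    · rcases h with h | ⟨h, -⟩
      · exact absurd (hlt.trans h) (lt_irrefl _)
      · exact absurd (h ▸ hlt) (lt_irrefl _)
    · rcases h with h | ⟨h, hji⟩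
      · exact absurd (heq ▸ h) (lt_irrefl _)
      · exact absurd (lt_of_le_of_lt hle hji) (lt_irrefl _)

lemma std_lt {i j : Fin n} (h : x j < x i ∨ (x j = x i ∧ j < i)) :
    Std x j < Std x i := by
  rw [std_eq_card, std_eq_card]
  exact Finset.card_lt_card (KS_ssubset x h)

lemma std_lt_iff {i j : Fin n} :
    Std x j < Std x i ↔ (x j < x i ∨ (x j = x i ∧ j < i)) := by
  constructor
  · intro h
    by_contra hc
    push_neg at hc
    obtain ⟨h1, h2⟩ := hc
    rcases lt_trichotomy (x i) (x j) with hx | hx | hx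
    · exact absurd (std_lt x (Or.inl hx)) (by omega)
    · rcases lt_trichotomy i j with hij | hij | hij
      · exact absurd (std_lt x (Or.inr ⟨hx, hij⟩)) (by omega)
      · exact absurd h (hij ▸ lt_irrefl _)
      · exact absurd hij (not_lt.mpr (h2 hx.symm))
    · exact absurd hx (not_lt.mpr h1)
  · exact std_lt x

lemma std_injective : Function.Injective (Std x) := by
  intro i j hij
  by_contra hne
  rcases lt_trichotomy (x i) (x j) with hx | hx | hx
  · exact absurd (std_lt x (Or.inl hx)) (by omega)
  · rcases lt_trichotomy i j with h | h | h
    · exact absurd (std_lt x (Or.inr ⟨hx, h⟩)) (by omega)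
    · exact hne h
    · exact absurd (std_lt x (Or.inr ⟨hx.symm, h⟩)) (by omega)
  · exact absurd (std_lt x (Or.inl hx)) (by omega)

lemma std_ge_one (i : Fin n) : 1 ≤ Std x i := by
  rw [std_eq_card]
  exact Finset.card_pos.mpr ⟨i, KS_self x i⟩

lemma std_le (i : Fin n) : Std x i ≤ n := by
  rw [std_eq_card]
  simpa using (Finset.card_le_univ (KS x i))

lemma std_isPerm : IsPerm (Std x) := by
  refine ⟨std_injective x, ?_⟩
  have himg : Finset.image (Std x) Finset.univ = Finset.Icc 1 n := by
    apply Finset.eq_of_subset_of_card_le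
    · intro v hv
      simp only [Finset.mem_image] at hv
      obtain ⟨i, -, rfl⟩ := hv
      exact Finset.mem_Icc.mpr ⟨std_ge_one x i, std_le x i⟩
    · rw [Finset.card_image_of_injective _ (std_injective x)]
      simp
  have := congrArg (fun s : Finset ℕ => (s : Set ℕ)) himg
  simpa [Set.image_univ] using this

lemma cayley_one_le {x : Fin n → ℕ} (hc : IsCayley x) (i : Fin n) : 1 ≤ x i := by
  obtain ⟨k, -, hr⟩ := hc
  have : x i ∈ Set.Icc 1 k := hr ▸ Set.mem_range_self i
  exact this.1

lemma modasc_first {x : Fin n → ℕ} (hm : IsModasc x) (h : 0 < n) : x ⟨0, h⟩ = 1 := by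
  obtain ⟨⟨k, hk, hr⟩, hAN⟩ := hm
  have h0 : x ⟨0, h⟩ ∈ Set.Icc 1 k := hr ▸ Set.mem_range_self _
  have h1 : (1 : ℕ) ∈ Set.range x := by
    rw [hr]; exact Set.mem_Icc.mpr ⟨le_refl _, h0.1.trans h0.2⟩
  obtain ⟨i1, hi1⟩ := h1
  -- least index with value 1
  set S : Finset (Fin n) := Finset.univ.filter fun j => x j = 1 with hS
  have hSne : S.Nonempty := ⟨i1, by simp [hS, hi1]⟩
  set i0 := S.min' hSne with hi0
  have hxi0 : x i0 = 1 := by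
    have := S.min'_mem hSne
    simpa [hS] using this
  have hnub : i0 ∈ Nub x := by
    intro j hj hxj
    have : i0 ≤ j := S.min'_le j (by simp [hS, hxj, hxi0])
    exact absurd hj (not_lt.mpr this)
  have hasc : i0 ∈ AscTops x := hAN ▸ hnub
  have hz : (i0 : ℕ) = 0 := by
    by_contra hz
    have hpos : 0 < (i0 : ℕ) := Nat.pos_of_ne_zero hz
    have hjlt : (i0 : ℕ) - 1 < n := by omega
    have := hasc ⟨(i0 : ℕ) - 1, hjlt⟩ (by simp; omega)
    rw [hxi0] at this
    have h1le : 1 ≤ x ⟨(i0 : ℕ) - 1, hjlt⟩ := cayley_one_le ⟨k, hk, hr⟩ _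
    omega
  have : i0 = ⟨0, h⟩ := Fin.ext hz
  rw [← this, hxi0]

lemma std_first {x : Fin n → ℕ} (hm : IsModasc x) (h : 0 < n) : Std x ⟨0, h⟩ = 1 := by
  have hx0 : x ⟨0, h⟩ = 1 := modasc_first hm h
  rw [std_eq_card]
  have : KS x ⟨0, h⟩ = {⟨0, h⟩} := by
    ext j
    simp only [KS, Finset.mem_filter, Finset.mem_univ, true_and, Finset.mem_singleton]
    constructor
    · rintro (hj | ⟨hj, -⟩)
      · rw [hx0] at hj
        exact absurd hj (by have := cayley_one_le hm.1 j; omega)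
      · exact le_antisymm hj (by simp [Fin.le_def])
    · rintro rfl
      exact Or.inr ⟨le_refl _, rfl⟩
  rw [this, Finset.card_singleton]

end StdLemmas

section Forward
variable {n : ℕ} {x : Fin n → ℕ}

lemma sm3' {a b c : Fin n} (h1 : a < b) (h2 : b < c) : StrictMono ![a, b, c] := by
  rw [Fin.strictMono_iff_lt_succ]
  intro i
  fin_cases i <;> simpa

lemma std_avoid32 (hp : IsPrim x) (hav : Avoids x ![2, 2, 1]) :
    ¬ Contains32Dash1 (Std x) := by
  rintro ⟨i, k, hi, hik, h1, h2⟩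
  set i1 : Fin n := ⟨(i : ℕ) + 1, hi⟩ with hi1
  rw [std_lt_iff] at h1 h2
  have hx1 : x i1 < x i := by
    rcases h1 with h | ⟨-, h⟩
    · exact h
    · exact absurd h (by rw [Fin.lt_def]; simp [hi1])
  have hx2 : x k < x i1 := by
    rcases h2 with h | ⟨-, h⟩
    · exact h
    · exact absurd h (by rw [Fin.lt_def]; simp [hi1]; omega)
  have hi1asc : i1 ∉ AscTops x := by
    intro hasc
    have := hasc i (by simp [hi1])
    omega
  have hi1nub : i1 ∉ Nub x := hp.1.2 ▸ hi1asc
  simp only [Nub, Set.mem_setOf_eq, not_forall] at hi1nub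
  obtain ⟨a, ha1, ha2⟩ := hi1nub
  rw [not_ne_iff] at ha2
  apply hav
  have hak : a < i1 := ha1
  have hi1k : i1 < k := by rw [Fin.lt_def]; simp [hi1]; omega
  refine ⟨![a, i1, k], sm3' hak hi1k, ?_⟩
  intro s t
  have key : ∀ u : Fin 3, x (![a, i1, k] u) = ![x a, x i1, x k] u := by
    intro u; fin_cases u <;> simp
  rw [key, key]
  fin_cases s <;> fin_cases t <;> simp [Fin.isValue] <;> omega

end Forward

section Patterns
variable {n : ℕ} {x : Fin n → ℕ}

lemma sm3 {a b c : Fin n} (h1 : a < b) (h2 : b < c) : StrictMono ![a, b, c] := by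
  rw [Fin.strictMono_iff_lt_succ]
  intro i
  fin_cases i <;> simpa

lemma sm4 {a b c d : Fin n} (h1 : a < b) (h2 : b < c) (h3 : c < d) :
    StrictMono ![a, b, c, d] := by
  rw [Fin.strictMono_iff_lt_succ]
  intro i
  fin_cases i <;> simpa

/-- From a 221 copy in a primitive modified ascent sequence, extract a 2321 copy. -/
lemma contains2321_of_contains221 (hp : IsPrim x) (h : Contains x ![2, 2, 1]) :
    Contains x ![2, 3, 2, 1] := by
  obtain ⟨f, hf, hpat⟩ := h
  have hab : f 0 < f 1 := hf (by decide : (0 : Fin 3) < 1)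
  have hbc : f 1 < f 2 := hf (by decide : (1 : Fin 3) < 2)
  have hxab : x (f 0) = x (f 1) := by
    have h1 := (hpat 0 1).not.mp (by decide)
    have h2 := (hpat 1 0).not.mp (by decide)
    omega
  have hxca : x (f 2) < x (f 0) := (hpat 2 0).mp (by decide)
  -- f 1 is not in Nub, hence not an ascent top
  have hbnub : f 1 ∉ Nub x := fun hn => hn (f 0) hab hxab
  have hbasc : f 1 ∉ AscTops x := hp.1.2 ▸ hbnub
  simp only [AscTops, Set.mem_setOf_eq, not_forall] at hbasc
  obtain ⟨j, hj1, hj2⟩ := hbasc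
  have hjb : x (f 1) < x j := by
    have hne := hp.2 j (f 1) (by omega)
    omega
  have haj : f 0 < j := by
    rw [Fin.lt_def]
    have h2 : (f 0 : ℕ) ≠ (j : ℕ) := by
      intro hh
      have : f 0 = j := Fin.ext hh
      rw [this] at hxab
      omega
    have h3 : (f 0 : ℕ) < (f 1 : ℕ) := hab
    omega
  have hjbf : j < f 1 := by rw [Fin.lt_def]; omega
  refine ⟨![f 0, j, f 1, f 2], sm4 haj hjbf hbc, ?_⟩
  intro s t
  have key : ∀ u : Fin 4, x (![f 0, j, f 1, f 2] u) =
      ![x (f 0), x j, x (f 1), x (f 2)] u := by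
    intro u; fin_cases u <;> simp
  rw [key, key]
  fin_cases s <;> fin_cases t <;> simp [Fin.isValue] <;> omega

/-- A 2321 copy yields a 221 copy. -/
lemma contains221_of_contains2321 (h : Contains x ![2, 3, 2, 1]) :
    Contains x ![2, 2, 1] := by
  obtain ⟨f, hf, hpat⟩ := h
  have hg : StrictMono (![0, 2, 3] : Fin 3 → Fin 4) := by decide
  refine ⟨f ∘ ![0, 2, 3], hf.comp hg, ?_⟩
  intro s t
  have h1 : (![2, 2, 1] : Fin 3 → ℕ) s < ![2, 2, 1] t ↔
      (![2, 3, 2, 1] : Fin 4 → ℕ) (![0, 2, 3] s) < ![2, 3, 2, 1] (![0, 2, 3] t) := by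
    revert s t; decide
  rw [h1]
  exact hpat _ _

end Patterns

section Inverse

attribute [local instance] Classical.propDecidable

variable {n : ℕ}

/-- Value `a` is merged with `a+1` (same block). -/
def Merge (p : Fin n → ℕ) (q : ℕ → Fin n) (a : ℕ) : Prop :=
  q a < q (a + 1) ∧ ∃ j : Fin n, (j : ℕ) + 1 = (q (a + 1) : ℕ) ∧ a + 1 < p j

/-- Block index of value `v`: one plus the number of breaks below `v`. -/
noncomputable def Bf (p : Fin n → ℕ) (q : ℕ → Fin n) (v : ℕ) : ℕ :=
  1 + ((Finset.Ico 1 v).filter fun a => ¬ Merge p q a).card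

/-- The candidate preimage of `p` under `Std`. -/
noncomputable def Xinv (p : Fin n → ℕ) (q : ℕ → Fin n) : Fin n → ℕ :=
  fun i => Bf p q (p i)

variable {p : Fin n → ℕ} {q : ℕ → Fin n}

lemma Bf_pos (v : ℕ) : 1 ≤ Bf p q v := Nat.le_add_right 1 _

lemma Bf_mono {u v : ℕ} (h : u ≤ v) : Bf p q u ≤ Bf p q v := by
  unfold Bf
  have : (Finset.Ico 1 u).filter (fun a => ¬ Merge p q a) ⊆
      (Finset.Ico 1 v).filter (fun a => ¬ Merge p q a) :=
    Finset.filter_subset_filter _ (Finset.Ico_subset_Ico le_rfl h)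
  have := Finset.card_le_card this
  omega

lemma Bf_one : Bf p q 1 = 1 := by
  unfold Bf
  simp

lemma Ico_succ_insert {v : ℕ} (hv : 1 ≤ v) :
    Finset.Ico 1 (v + 1) = insert v (Finset.Ico 1 v) := by
  ext a
  simp only [Finset.mem_Ico, Finset.mem_insert]
  omega

lemma Bf_succ_le {v : ℕ} : Bf p q (v + 1) ≤ Bf p q v + 1 := by
  rcases Nat.eq_zero_or_pos v with rfl | hv
  · unfold Bf; simp
  · unfold Bf
    rw [Ico_succ_insert hv, Finset.filter_insert]
    split
    · have := Finset.card_insert_le v ((Finset.Ico 1 v).filter fun a => ¬ Merge p q a)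
      omega
    · omega

lemma Bf_succ_eq_of_merge {v : ℕ} (hv : 1 ≤ v) (hm : Merge p q v) :
    Bf p q (v + 1) = Bf p q v := by
  unfold Bf
  rw [Ico_succ_insert hv, Finset.filter_insert]
  split
  · exact absurd hm (by assumption)
  · rfl

lemma Bf_succ_lt_of_not_merge {v : ℕ} (hv : 1 ≤ v) (hm : ¬ Merge p q v) :
    Bf p q v < Bf p q (v + 1) := by
  unfold Bf
  rw [Ico_succ_insert hv, Finset.filter_insert]
  split
  · rw [Finset.card_insert_of_notMem (by simp)]
    omega
  · exact absurd hm (by simp_all)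

lemma Bf_eq_merge_all {u v : ℕ} (hu : 1 ≤ u) (huv : u ≤ v)
    (h : Bf p q u = Bf p q v) : ∀ a, u ≤ a → a < v → Merge p q a := by
  intro a h1 h2
  by_contra hm
  have hb1 : Bf p q u ≤ Bf p q a := Bf_mono h1
  have hb2 : Bf p q a < Bf p q (a + 1) := Bf_succ_lt_of_not_merge (hu.trans h1) hm
  have hb3 : Bf p q (a + 1) ≤ Bf p q v := Bf_mono h2
  omega

lemma Bf_lt_of_break {u v a : ℕ} (hu : 1 ≤ u) (h1 : u ≤ a) (h2 : a < v)
    (hm : ¬ Merge p q a) : Bf p q u < Bf p q v := by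
  have hb1 : Bf p q u ≤ Bf p q a := Bf_mono h1
  have hb2 : Bf p q a < Bf p q (a + 1) := Bf_succ_lt_of_not_merge (hu.trans h1) hm
  have hb3 : Bf p q (a + 1) ≤ Bf p q v := Bf_mono h2
  omega

section WithHyps
variable (hpq : ∀ j, q (p j) = j) (hqp : ∀ v, 1 ≤ v → v ≤ n → p (q v) = v)
  (hub : ∀ j : Fin n, 1 ≤ p j ∧ p j ≤ n)

include hpq in
lemma p_inj : Function.Injective p := by
  intro i j h
  have := congrArg q h
  rwa [hpq, hpq] at this

include hqp in
lemma Merge_gap {a : ℕ} (ha : 1 ≤ a) (han : a + 1 ≤ n) (hm : Merge p q a) :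
    (q a : ℕ) + 2 ≤ (q (a + 1) : ℕ) := by
  obtain ⟨hlt, j, hj1, hj2⟩ := hm
  have hne : q a ≠ j := by
    intro h
    have := hqp a ha (by omega)
    rw [h] at this
    omega
  have h1 : (q a : ℕ) < (q (a + 1) : ℕ) := hlt
  have h2 : (q a : ℕ) ≠ (j : ℕ) := fun hh => hne (Fin.ext hh)
  omega

include hqp in
lemma Merge_chain {u v : ℕ} (hu : 1 ≤ u) (hv : v ≤ n) (huv : u ≤ v)
    (hm : ∀ a, u ≤ a → a < v → Merge p q a) :
    (q u : ℕ) + 2 * (v - u) ≤ (q v : ℕ) := by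
  induction v, huv using Nat.le_induction with
  | base => simp
  | succ v hv' ih =>
    have h1 : (q u : ℕ) + 2 * (v - u) ≤ (q v : ℕ) :=
      ih (by omega) (fun a h1 h2 => hm a h1 (by omega))
    have h2 : (q v : ℕ) + 2 ≤ (q (v + 1) : ℕ) :=
      Merge_gap hqp (by omega) (by omega) (hm v (by omega) (by omega))
    omega

include hqp in
lemma Merge_chain_lt {u v : ℕ} (hu : 1 ≤ u) (hv : v ≤ n) (huv : u < v)
    (hm : ∀ a, u ≤ a → a < v → Merge p q a) : (q u : ℕ) < (q v : ℕ) := by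
  have := Merge_chain hqp hu hv huv.le hm
  omega

include hpq hqp hub in
lemma val_lt_of_idx {i j : Fin n} (hx : Xinv p q i = Xinv p q j) (hij : i < j) :
    p i < p j := by
  have hne : p i ≠ p j := fun h => absurd (p_inj hpq h) (ne_of_lt hij)
  rcases lt_or_gt_of_ne hne with h | h
  · exact h
  · exfalso
    have hmerge : ∀ a, p j ≤ a → a < p i → Merge p q a :=
      Bf_eq_merge_all (hub j).1 h.le hx.symm
    have := Merge_chain_lt hqp (hub j).1 (hub i).2 h hmerge
    rw [hpq, hpq] at this
    exact absurd hij (by rw [Fin.lt_def] at hij ⊢; omega)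

include hpq hqp hub in
lemma xinv_noflat : NoFlat (Xinv p q) := by
  intro i j hij hx
  have hij' : i < j := by rw [Fin.lt_def]; omega
  have hlt : p i < p j := val_lt_of_idx hpq hqp hub hx hij'
  have hmerge : ∀ a, p i ≤ a → a < p j → Merge p q a :=
    Bf_eq_merge_all (hub i).1 hlt.le hx
  have := Merge_chain hqp (hub i).1 (hub j).2 hlt.le hmerge
  rw [hpq, hpq] at this
  omega


section MainStd

lemma bm_ex (p : Fin n → ℕ) (q : ℕ → Fin n) (v : ℕ) :
    ∃ w, 1 ≤ w ∧ Bf p q w = Bf p q v := by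
  rcases Nat.eq_zero_or_pos v with rfl | h
  · exact ⟨1, le_rfl, by unfold Bf; simp⟩
  · exact ⟨v, h, rfl⟩

/-- The least value in the block of `v`. -/
noncomputable def blockMin (p : Fin n → ℕ) (q : ℕ → Fin n) (v : ℕ) : ℕ :=
  Nat.find (bm_ex p q v)

lemma blockMin_spec (v : ℕ) :
    1 ≤ blockMin p q v ∧ Bf p q (blockMin p q v) = Bf p q v :=
  Nat.find_spec (bm_ex p q v)

lemma blockMin_min {v w : ℕ} (hw : 1 ≤ w) (hb : Bf p q w = Bf p q v) :
    blockMin p q v ≤ w :=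
  Nat.find_min' _ ⟨hw, hb⟩

lemma blockMin_le {v : ℕ} (hv : 1 ≤ v) : blockMin p q v ≤ v :=
  blockMin_min hv rfl

include hpq hqp hub in
lemma cardA (i : Fin n) :
    (Finset.univ.filter fun j => Xinv p q j < Xinv p q i).card =
      blockMin p q (p i) - 1 := by
  have hspec := blockMin_spec (p := p) (q := q) (p i)
  set v := p i with hv
  set m := blockMin p q v with hm
  have hm1 : 1 ≤ m := hspec.1
  have hmB : Bf p q m = Bf p q v := hspec.2
  have hmv : m ≤ v := blockMin_le (hub i).1
  have hvn : v ≤ n := (hub i).2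
  rw [show m - 1 = (Finset.Ico 1 m).card by simp]
  apply Finset.card_nbij' (fun j => p j) (fun w => q w)
  · intro j hj
    simp only [Finset.mem_coe, Finset.mem_filter, Finset.mem_univ, true_and] at hj
    have hlt : Bf p q (p j) < Bf p q v := hj
    simp only [Finset.mem_coe, Finset.mem_Ico]
    refine ⟨(hub j).1, ?_⟩
    by_contra hge
    have : Bf p q m ≤ Bf p q (p j) := Bf_mono (by omega)
    omega
  · intro w hw
    simp only [Finset.mem_coe, Finset.mem_Ico] at hw
    simp only [Finset.mem_coe, Finset.mem_filter, Finset.mem_univ, true_and]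
    have hwn : w ≤ n := by omega
    show Bf p q (p (q w)) < Bf p q v
    rw [hqp w hw.1 hwn]
    have h1 : Bf p q w ≤ Bf p q m := Bf_mono hw.2.le
    have h2 : Bf p q w ≠ Bf p q v := by
      intro h
      exact absurd (blockMin_min hw.1 h) (by omega)
    omega
  · intro j _
    exact hpq j
  · intro w hw
    simp only [Finset.mem_coe, Finset.mem_Ico] at hw
    exact hqp w hw.1 (by omega)

include hpq hqp hub in
lemma cardC (i : Fin n) :
    (Finset.univ.filter fun j => j ≤ i ∧ Xinv p q j = Xinv p q i).card =
      p i + 1 - blockMin p q (p i) := by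
  have hspec := blockMin_spec (p := p) (q := q) (p i)
  set v := p i with hv
  set m := blockMin p q v with hm
  have hm1 : 1 ≤ m := hspec.1
  have hmB : Bf p q m = Bf p q v := hspec.2
  have hmv : m ≤ v := blockMin_le (hub i).1
  have hvn : v ≤ n := (hub i).2
  have hqvi : q v = i := by rw [hv]; exact hpq i
  rw [show v + 1 - m = (Finset.Icc m v).card by rw [Nat.card_Icc]]
  apply Finset.card_nbij' (fun j => p j) (fun w => q w)
  · intro j hj
    simp only [Finset.mem_coe, Finset.mem_filter, Finset.mem_univ, true_and] at hj
    obtain ⟨hji, hjx⟩ := hj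
    have hBeq : Bf p q (p j) = Bf p q v := hjx
    rw [Fin.le_def] at hji
    simp only [Finset.mem_coe, Finset.mem_Icc]
    refine ⟨blockMin_min (hub j).1 hBeq, ?_⟩
    by_contra hgt
    push_neg at hgt
    have hmerge : ∀ a, v ≤ a → a < p j → Merge p q a :=
      Bf_eq_merge_all (hub i).1 hgt.le hBeq.symm
    have hlt : (q v : ℕ) < (q (p j) : ℕ) :=
      Merge_chain_lt hqp (hub i).1 (hub j).2 hgt hmerge
    rw [hqvi, hpq j] at hlt
    omega
  · intro w hw
    simp only [Finset.mem_coe, Finset.mem_Icc] at hw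
    have hw1 : 1 ≤ w := by omega
    have hwn : w ≤ n := by omega
    simp only [Finset.mem_coe, Finset.mem_filter, Finset.mem_univ, true_and]
    have hBw : Bf p q w = Bf p q v := by
      have h1 : Bf p q m ≤ Bf p q w := Bf_mono hw.1
      have h2 : Bf p q w ≤ Bf p q v := Bf_mono hw.2
      omega
    constructor
    · rcases eq_or_lt_of_le hw.2 with heq | hlt
      · rw [heq, hqvi]
      · have hmerge : ∀ a, w ≤ a → a < v → Merge p q a :=
          Bf_eq_merge_all hw1 hw.2 hBw
        have h3 : (q w : ℕ) < (q v : ℕ) :=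
          Merge_chain_lt hqp hw1 hvn hlt hmerge
        rw [hqvi] at h3
        rw [Fin.le_def]
        omega
    · show Bf p q (p (q w)) = Bf p q v
      rw [hqp w hw1 hwn]
      exact hBw
  · intro j _
    exact hpq j
  · intro w hw
    simp only [Finset.mem_coe, Finset.mem_Icc] at hw
    exact hqp w (by omega) (by omega)

include hpq hqp hub in
lemma std_xinv : Std (Xinv p q) = p := by
  funext i
  unfold Std
  rw [cardA hpq hqp hub i, cardC hpq hqp hub i]
  have hspec := blockMin_spec (p := p) (q := q) (p i)
  have hle := blockMin_le (p := p) (q := q) (hub i).1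
  omega

end MainStd

section MainStruct

lemma Bf_ivt : ∀ m, 1 ≤ m → ∀ v, 1 ≤ v → v ≤ Bf p q m →
    ∃ w, 1 ≤ w ∧ w ≤ m ∧ Bf p q w = v := by
  intro m hm
  induction m, hm using Nat.le_induction with
  | base =>
    intro v hv1 hv2
    rw [Bf_one] at hv2
    exact ⟨1, le_rfl, le_rfl, by rw [Bf_one]; omega⟩
  | succ m hm ih =>
    intro v hv1 hv2
    by_cases hc : v ≤ Bf p q m
    · obtain ⟨w, h1, h2, h3⟩ := ih v hv1 hc
      exact ⟨w, h1, by omega, h3⟩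
    · have h1 : Bf p q (m + 1) ≤ Bf p q m + 1 := Bf_succ_le
      exact ⟨m + 1, by omega, le_rfl, by omega⟩

include hqp hub in
lemma xinv_cayley (hn : 0 < n) : IsCayley (Xinv p q) := by
  refine ⟨Bf p q n, ?_, ?_⟩
  · have h1 := Finset.card_filter_le (Finset.Ico 1 n) (fun a => ¬ Merge p q a)
    have h2 : (Finset.Ico 1 n).card = n - 1 := Nat.card_Ico 1 n
    unfold Bf
    omega
  · ext v
    simp only [Set.mem_range, Set.mem_Icc]
    constructor
    · rintro ⟨i, rfl⟩
      exact ⟨Bf_pos _, Bf_mono (hub i).2⟩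
    · rintro ⟨h1, h2⟩
      obtain ⟨w, hw1, hw2, hw3⟩ := Bf_ivt n hn v h1 h2
      refine ⟨q w, ?_⟩
      show Bf p q (p (q w)) = v
      rw [hqp w hw1 hw2]
      exact hw3

include hpq hqp hub in
lemma xinv_asctops_nub (hn : 0 < n) (hfirst : p ⟨0, hn⟩ = 1)
    (hav : ¬ Contains32Dash1 p) : AscTops (Xinv p q) = Nub (Xinv p q) := by
  ext i
  by_cases hi0 : (i : ℕ) = 0
  · constructor
    · intro _ j hj
      exact absurd (Fin.lt_def.mp hj) (by omega)
    · intro _ j hj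
      exact absurd hj (by omega)
  · -- i > 0
    have hpi2 : 2 ≤ p i := by
      rcases Nat.lt_or_ge (p i) 2 with h | h
      · exfalso
        have h1 : p i = 1 := by have := (hub i).1; omega
        have : i = ⟨0, hn⟩ := p_inj hpq (by rw [h1, hfirst])
        rw [this] at hi0
        exact hi0 rfl
      · exact h
    have ha1 : 1 ≤ p i - 1 := by omega
    have hae : p i - 1 + 1 = p i := by omega
    have han : p i - 1 + 1 ≤ n := hae ▸ (hub i).2
    have hqa1 : q (p i - 1 + 1) = i := by rw [hae]; exact hpq i
    have hjlt : (i : ℕ) - 1 < n := by have := i.isLt; omega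
    set j : Fin n := ⟨(i : ℕ) - 1, hjlt⟩ with hj
    have hji : (j : ℕ) + 1 = (i : ℕ) := by simp [hj]; omega
    have claim1 : i ∈ AscTops (Xinv p q) ↔ Xinv p q j < Xinv p q i := by
      constructor
      · intro h
        exact h j hji
      · intro h j' hj'
        have : j' = j := Fin.ext (by omega)
        rwa [this]
    have claim2 : i ∈ Nub (Xinv p q) ↔ ¬ Merge p q (p i - 1) := by
      constructor
      · intro hnub hm
        have hgap : (q (p i - 1) : ℕ) + 2 ≤ (q (p i - 1 + 1) : ℕ) :=
          Merge_gap hqp ha1 han hm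
        rw [hqa1] at hgap
        have hlt : q (p i - 1) < i := by rw [Fin.lt_def]; omega
        refine hnub (q (p i - 1)) hlt ?_
        show Bf p q (p (q (p i - 1))) = Bf p q (p i)
        rw [hqp _ ha1 (by omega), ← hae]
        exact (Bf_succ_eq_of_merge ha1 hm).symm
      · intro hnm j' hj' heq
        have hplt : p j' < p i := val_lt_of_idx hpq hqp hub heq hj'
        have hmerge : ∀ a, p j' ≤ a → a < p i → Merge p q a :=
          Bf_eq_merge_all (hub j').1 hplt.le heq
        exact hnm (hmerge (p i - 1) (by omega) (by omega))
    have claim3 : ¬ Merge p q (p i - 1) ↔ Xinv p q j < Xinv p q i := by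
      constructor
      · intro hnm
        have hjne : j ≠ i := by intro h; rw [h] at hji; omega
        have hwne : p j ≠ p i := fun h => hjne (p_inj hpq h)
        rcases lt_or_gt_of_ne hwne with hw | hw
        · -- p j < p i : break at p i - 1 gives the strict increase
          show Bf p q (p j) < Bf p q (p i)
          have h1 : Bf p q (p j) ≤ Bf p q (p i - 1) := Bf_mono (by omega)
          have h2 : Bf p q (p i - 1) < Bf p q (p i - 1 + 1) :=
            Bf_succ_lt_of_not_merge ha1 hnm
          rw [hae] at h2
          omega
        · -- p j > p i : contradiction with avoidance of 32-1
          exfalso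
          have hex : ∃ j'' : Fin n, (j'' : ℕ) + 1 = (q (p i - 1 + 1) : ℕ) ∧
              (p i - 1) + 1 < p j'' := by
            refine ⟨j, ?_, ?_⟩
            · rw [hqa1]; exact hji
            · omega
          have hnlt : ¬ q (p i - 1) < q (p i - 1 + 1) := fun h => hnm ⟨h, hex⟩
          rw [hqa1] at hnlt
          have hqane : q (p i - 1) ≠ i := by
            intro h
            have := hqp (p i - 1) ha1 (by omega)
            rw [h] at this
            omega
          have higt : (i : ℕ) < (q (p i - 1) : ℕ) := by
            rw [Fin.lt_def] at hnlt
            have : (q (p i - 1) : ℕ) ≠ (i : ℕ) := fun h => hqane (Fin.ext h)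
            omega
          apply hav
          refine ⟨j, q (p i - 1), by omega, by omega, ?_, ?_⟩
          · have heqi : (⟨(j : ℕ) + 1, by omega⟩ : Fin n) = i := Fin.ext hji
            rw [heqi]
            omega
          · have heqi : (⟨(j : ℕ) + 1, by omega⟩ : Fin n) = i := Fin.ext hji
            rw [heqi, hqp (p i - 1) ha1 (by omega)]
            omega
      · intro hlt hm
        obtain ⟨-, j'', hj''1, hj''2⟩ := hm
        rw [hqa1] at hj''1
        have : j'' = j := Fin.ext (by omega)
        rw [this, hae] at hj''2
        have : Bf p q (p i) ≤ Bf p q (p j) := Bf_mono hj''2.le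
        have hxx : Bf p q (p j) < Bf p q (p i) := hlt
        omega
    rw [claim1, ← claim3, claim2]

include hpq hqp hub in
lemma xinv_avoids (hav : ¬ Contains32Dash1 p) : Avoids (Xinv p q) ![2, 2, 1] := by
  rintro ⟨f, hf, hpat⟩
  have hab : f 0 < f 1 := hf (by decide : (0 : Fin 3) < 1)
  have hbc : f 1 < f 2 := hf (by decide : (1 : Fin 3) < 2)
  have hxab : Xinv p q (f 0) = Xinv p q (f 1) := by
    have h1 := (hpat 0 1).not.mp (by decide)
    have h2 := (hpat 1 0).not.mp (by decide)
    omega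
  have hxca : Xinv p q (f 2) < Xinv p q (f 0) := (hpat 2 0).mp (by decide)
  have hpab : p (f 0) < p (f 1) := val_lt_of_idx hpq hqp hub hxab hab
  have hmerge : ∀ a, p (f 0) ≤ a → a < p (f 1) → Merge p q a :=
    Bf_eq_merge_all (hub (f 0)).1 hpab.le hxab
  have hm : Merge p q (p (f 1) - 1) := hmerge _ (by omega) (by omega)
  obtain ⟨-, j', hj'1, hj'2⟩ := hm
  have hae : p (f 1) - 1 + 1 = p (f 1) := by omega
  rw [hae, hpq (f 1)] at hj'1
  rw [hae] at hj'2
  have hpcb : p (f 2) < p (f 1) := by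
    by_contra hge
    push_neg at hge
    have : Bf p q (p (f 1)) ≤ Bf p q (p (f 2)) := Bf_mono hge
    have hxx : Bf p q (p (f 2)) < Bf p q (p (f 0)) := hxca
    have hxab' : Bf p q (p (f 0)) = Bf p q (p (f 1)) := hxab
    omega
  apply hav
  have hcb : (f 1 : ℕ) < (f 2 : ℕ) := hbc
  refine ⟨j', f 2, by omega, by omega, ?_, ?_⟩
  · have heqi : (⟨(j' : ℕ) + 1, by omega⟩ : Fin n) = f 1 := Fin.ext hj'1
    rw [heqi]
    omega
  · have heqi : (⟨(j' : ℕ) + 1, by omega⟩ : Fin n) = f 1 := Fin.ext hj'1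
    rw [heqi]
    omega

end MainStruct

end WithHyps
end Inverse

/-- `Prim_n(221) = Prim_n(2321)` and
`st(Prim_n(221)) = {p : p_1 = 1, p avoids 32-1}`. -/
theorem prim_221_2321 (n : ℕ) :
    ({x : Fin n → ℕ | IsPrim x ∧ Avoids x ![2, 2, 1]} =
      {x : Fin n → ℕ | IsPrim x ∧ Avoids x ![2, 3, 2, 1]}) ∧
    (fun x => Std x) '' {x : Fin n → ℕ | IsPrim x ∧ Avoids x ![2, 2, 1]} =
      {p : Fin n → ℕ | IsPerm p ∧ (∀ h : 0 < n, p ⟨0, h⟩ = 1) ∧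
        ¬ Contains32Dash1 p} := by
  constructor
  · -- Part (i): Prim_n(221) = Prim_n(2321)
    ext x
    simp only [Set.mem_setOf_eq]
    constructor
    · rintro ⟨hp, hav⟩
      exact ⟨hp, fun hc => hav (contains221_of_contains2321 hc)⟩
    · rintro ⟨hp, hav⟩
      exact ⟨hp, fun hc => hav (contains2321_of_contains221 hp hc)⟩
  · -- Part (ii): st(Prim_n(221)) = Ω_n
    ext pp
    simp only [Set.mem_image, Set.mem_setOf_eq]
    constructor
    · rintro ⟨x, ⟨hp, hav⟩, rfl⟩
      exact ⟨std_isPerm x, fun h => std_first hp.1 h, std_avoid32 hp hav⟩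
    · rintro ⟨hperm, hfirst, hav⟩
      rcases Nat.eq_zero_or_pos n with rfl | hn
      · -- n = 0 : the empty word works
        refine ⟨pp, ⟨⟨⟨⟨0, le_rfl, ?_⟩, ?_⟩, ?_⟩, ?_⟩, ?_⟩
        · rw [Set.range_eq_empty, Set.Icc_eq_empty (by omega)]
        · ext i
          exact absurd i.isLt (by omega)
        · intro i
          exact absurd i.isLt (by omega)
        · rintro ⟨f, -, -⟩
          exact absurd (f 0).isLt (by omega)
        · funext i
          exact absurd i.isLt (by omega)
      · -- n > 0 : use the explicit inverse construction
        haveI : Nonempty (Fin n) := ⟨⟨0, hn⟩⟩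
        obtain ⟨hinj, hrange⟩ := hperm
        set q : ℕ → Fin n := Function.invFun pp with hqdef
        have hpq : ∀ j, q (pp j) = j := fun j => Function.leftInverse_invFun hinj j
        have hqp : ∀ v, 1 ≤ v → v ≤ n → pp (q v) = v := by
          intro v h1 h2
          have hv : v ∈ Set.range pp := hrange ▸ Set.mem_Icc.mpr ⟨h1, h2⟩
          exact Function.invFun_eq hv
        have hub : ∀ j, 1 ≤ pp j ∧ pp j ≤ n := by
          intro j
          have : pp j ∈ Set.Icc 1 n := hrange ▸ Set.mem_range_self j
          exact ⟨this.1, this.2⟩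
        exact ⟨Xinv pp q,
          ⟨⟨⟨xinv_cayley hqp hub hn,
              xinv_asctops_nub hpq hqp hub hn (hfirst hn) hav⟩,
            xinv_noflat hpq hqp hub⟩,
           xinv_avoids hpq hqp hub hav⟩,
          std_xinv hpq hqp hub⟩
end
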